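/- For any G ∈ L²([0,T]; L(X)) there exists a unique strongly continuous operator-valued function 𝔗 : Δ → L(X), Δ = {(t,s) : 0 ≤ s ≤ t ≤ T}, such that 𝔗(t,t) = I for all t ∈ [0,T], 𝔗(t,r)𝔗(r,s) = 𝔗(t,s) for 0 ≤ s ≤ r ≤ t ≤ T, and for all y ∈ X, 𝔗(t,s;G)y = 𝔘(t−s)y + ∫ₛᵗ 𝔘(t−r)G(r)𝔗(r,s;G)y dr = 𝔘(t−s)y + ∫ₛᵗ 𝔗(t,r;G)G(r)𝔘(r−s)y dr. -/

import Mathlib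

open Filter MeasureTheory Set Topology


namespace EvolOp

variable {X : Type*} [NormedAddCommGroup X] [NormedSpace ℝ X]

/-- Composition of a pointwise-strongly-measurable operator family with a measurable function. -/
lemma aesm_apply {α : Type*} [MeasurableSpace α] {μ : Measure α}
    (A : α → (X →L[ℝ] X)) (hA : ∀ x : X, AEStronglyMeasurable (fun a => A a x) μ)
    {v : α → X} (hv : AEStronglyMeasurable v μ) :
    AEStronglyMeasurable (fun a => A a (v a)) μ := by
  obtain ⟨w, hwsm, hvw⟩ := hv
  have key : AEStronglyMeasurable (fun a => A a (w a)) μ := by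
    refine aestronglyMeasurable_of_tendsto_ae (f := fun n (a : α) => A a (hwsm.approx n a))
      (g := fun a => A a (w a)) atTop ?_ ?_
    · intro n
      have hrw : (fun a => A a (hwsm.approx n a)) =
          fun a => ∑ c ∈ (hwsm.approx n).range,
            Set.indicator ((hwsm.approx n) ⁻¹' {c}) (fun a => A a c) a := by
        funext a
        rw [Finset.sum_eq_single (hwsm.approx n a)]
        · rw [Set.indicator_of_mem (by simp : a ∈ (hwsm.approx n) ⁻¹' {hwsm.approx n a})]
        · intro b _ hb
          exact Set.indicator_of_notMem (by simpa using fun h => hb h.symm) _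
        · intro h
          exact absurd (SimpleFunc.mem_range_self _ a) h
      show AEStronglyMeasurable (fun a => A a (hwsm.approx n a)) μ
      rw [hrw]
      exact Finset.aestronglyMeasurable_fun_sum _ fun c _ =>
        (hA c).indicator ((hwsm.approx n).measurableSet_fiber c)
    · refine Filter.Eventually.of_forall fun a => ?_
      exact ((A a).continuous.tendsto _).comp (hwsm.tendsto_approx a)
  refine key.congr ?_
  filter_upwards [hvw] with a ha
  rw [ha]

lemma pow_mul_sub_le {x y : ℝ} (hy : 0 ≤ y) (hxy : y ≤ x) :
    ∀ n : ℕ, (n + 1 : ℝ) * (y ^ n * (x - y)) ≤ x ^ (n + 1) - y ^ (n + 1) := by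
  intro n
  induction n with
  | zero => simp
  | succ n ih =>
    have hx : 0 ≤ x := hy.trans hxy
    have h1 : x ^ (n + 2) - y ^ (n + 2)
        = x * (x ^ (n + 1) - y ^ (n + 1)) + (x - y) * y ^ (n + 1) := by ring
    have h2 : x * ((n + 1 : ℝ) * (y ^ n * (x - y))) ≤ x * (x ^ (n + 1) - y ^ (n + 1)) :=
      mul_le_mul_of_nonneg_left ih hx
    have hsub : 0 ≤ x - y := sub_nonneg.2 hxy
    have h3 : y * ((n + 1 : ℝ) * (y ^ n * (x - y))) ≤ x * ((n + 1 : ℝ) * (y ^ n * (x - y))) :=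
      mul_le_mul_of_nonneg_right hxy
        (mul_nonneg (by positivity) (mul_nonneg (pow_nonneg hy n) hsub))
    have hyp : 0 ≤ y ^ (n + 1) := pow_nonneg hy _
    have : (↑(n + 1) + 1 : ℝ) * (y ^ (n + 1) * (x - y))
        = y * ((n + 1 : ℝ) * (y ^ n * (x - y))) + (x - y) * y ^ (n + 1) := by
      push_cast; ring
    rw [this, h1]
    push_cast
    nlinarith [h2, h3, mul_nonneg hsub hyp]


/-- All data and hypotheses of the evolution-operator problem, bundled. -/
structure Setup (X : Type*) [NormedAddCommGroup X] [NormedSpace ℝ X] : Type _ where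
  U : ℝ → (X →L[ℝ] X)
  T : ℝ
  G : ℝ → (X →L[ℝ] X)
  M : ℝ
  hM1 : 1 ≤ M
  hM : ∀ t ∈ Set.Icc 0 T, ‖U t‖ ≤ M
  hU0 : U 0 = 1
  hUadd : ∀ s ≥ (0:ℝ), ∀ t ≥ (0:ℝ), U (t + s) = U t ∘L U s
  hUcont : ∀ x : X, ContinuousOn (fun t => U t x) (Set.Ici 0)
  hT : 0 < T
  hGx : ∀ x : X, AEStronglyMeasurable (fun t => G t x) (volume.restrict (Set.Ioc 0 T))
  hGint : Integrable (Set.indicator (Set.Ioc 0 T) (fun r => ‖G r‖)) volume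

variable (S : Setup X)

/-- The scalar kernel `‖G‖`, extended by zero. -/
noncomputable def Setup.k : ℝ → ℝ := Set.indicator (Set.Ioc 0 S.T) (fun r => ‖S.G r‖)

lemma Setup.k_nonneg (r : ℝ) : 0 ≤ S.k r :=
  Set.indicator_nonneg (fun r _ => norm_nonneg (S.G r)) r

lemma Setup.k_eq {r : ℝ} (h : r ∈ Set.Ioc 0 S.T) : S.k r = ‖S.G r‖ :=
  Set.indicator_of_mem h _

lemma Setup.k_int : Integrable S.k volume := S.hGint

lemma Setup.k_ii (a b : ℝ) : IntervalIntegrable S.k volume a b :=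
  S.k_int.intervalIntegrable

/-- The primitive of the kernel. -/
noncomputable def Setup.g : ℝ → ℝ := fun x => ∫ r in (0:ℝ)..x, S.k r

lemma Setup.g_cont : Continuous S.g :=
  intervalIntegral.continuous_primitive (fun _ _ => S.k_ii _ _) 0

lemma Setup.g_sub (a b : ℝ) : S.g b - S.g a = ∫ r in a..b, S.k r := by
  have := intervalIntegral.integral_add_adjacent_intervals (S.k_ii 0 a) (S.k_ii a b)
  unfold Setup.g; linarith

lemma Setup.g_mono : Monotone S.g := by
  intro a b hab
  have h := S.g_sub a b
  have : 0 ≤ ∫ r in a..b, S.k r :=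
    intervalIntegral.integral_nonneg hab (fun r _ => S.k_nonneg r)
  linarith

lemma Setup.M_pos : (0:ℝ) < S.M := lt_of_lt_of_le one_pos S.hM1

lemma Setup.norm_U_apply_le {τ : ℝ} (h : τ ∈ Set.Icc 0 S.T) (x : X) :
    ‖S.U τ x‖ ≤ S.M * ‖x‖ :=
  le_trans ((S.U τ).le_opNorm x) (mul_le_mul_of_nonneg_right (S.hM τ h) (norm_nonneg x))

/-- total mass -/
noncomputable def Setup.K : ℝ := S.g S.T - S.g 0

lemma Setup.K_nonneg : 0 ≤ S.K := sub_nonneg.2 (S.g_mono S.hT.le)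

/-- The core Grönwall-type estimate. -/
lemma Setup.core {s t : ℝ} (hst : s ≤ t) (n : ℕ) :
    ∫ r in s..t, S.k r * (S.g r - S.g s) ^ n ≤ (S.g t - S.g s) ^ (n + 1) / (n + 1) := by
  have hginteg : ∀ a b : ℝ, IntervalIntegrable (fun r => S.k r * (S.g r - S.g s) ^ n) volume a b :=
    fun a b => (S.k_ii a b).mul_continuousOn
      (((S.g_cont.sub continuous_const).pow n).continuousOn)
  have hFt0 : 0 ≤ S.g t - S.g s := sub_nonneg.2 (S.g_mono hst)
  refine le_of_forall_pos_le_add fun ε hε => ?_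
  set c : ℝ := (S.g t - S.g s) ^ n with hc
  have hc0 : 0 ≤ c := pow_nonneg hFt0 n
  set ε' : ℝ := ε / (c + 1) with hε'
  have hε'0 : 0 < ε' := div_pos hε (by linarith)
  -- uniform continuity of g on [s,t]
  have huc := isCompact_Icc.uniformContinuousOn_of_continuous
    (s := Set.Icc s t) S.g_cont.continuousOn
  rw [Metric.uniformContinuousOn_iff] at huc
  obtain ⟨δ, hδ0, hδ⟩ := huc ε' hε'0
  obtain ⟨m, hm⟩ := exists_nat_gt (max ((t - s)/δ) 1)
  have hm1 : (1:ℝ) ≤ m := le_of_lt (lt_of_le_of_lt (le_max_right _ _) hm)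
  have hm0 : (0:ℝ) < m := lt_of_lt_of_le one_pos hm1
  have hmlt : (t - s)/δ < m := lt_of_le_of_lt (le_max_left _ _) hm
  have hstep : (t - s)/m < δ := by
    rw [div_lt_iff₀ hm0]
    rw [div_lt_iff₀ hδ0] at hmlt
    linarith [hmlt]
  have hstep0 : 0 ≤ (t - s)/m := div_nonneg (by linarith) hm0.le
  set a : ℕ → ℝ := fun i => s + i * ((t - s)/m) with ha
  have ha0 : a 0 = s := by simp [ha]
  have ham : a m = t := by
    simp only [ha]
    field_simp
    ring
  have hmono : ∀ i j : ℕ, i ≤ j → a i ≤ a j := by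
    intro i j hij
    simp only [ha]
    have : (i:ℝ) ≤ j := Nat.cast_le.2 hij
    nlinarith
  have hmem : ∀ i, i ≤ m → a i ∈ Set.Icc s t := by
    intro i hi
    constructor
    · rw [← ha0]; exact hmono 0 i (Nat.zero_le _)
    · rw [← ham]; exact hmono i m hi
  have hadj : ∀ i, a (i+1) - a i = (t - s)/m := by intro i; simp [ha]; ring
  -- sum decomposition
  have hsum : (∑ i ∈ Finset.range m, ∫ r in a i..a (i+1), S.k r * (S.g r - S.g s) ^ n)
      = ∫ r in s..t, S.k r * (S.g r - S.g s) ^ n := by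
    have := intervalIntegral.sum_integral_adjacent_intervals
      (a := a) (n := m) (fun i _ => hginteg _ _)
    rw [this, ha0, ham]
  rw [← hsum]
  -- per piece estimate
  have hpiece : ∀ i ∈ Finset.range m,
      (∫ r in a i..a (i+1), S.k r * (S.g r - S.g s) ^ n)
        ≤ ((S.g (a (i+1)) - S.g s) ^ (n+1) - (S.g (a i) - S.g s) ^ (n+1)) / ((n:ℝ)+1)
          + ((S.g (a (i+1)) - S.g s) ^ n - (S.g (a i) - S.g s) ^ n) * ε' := by
    intro i hi
    rw [Finset.mem_range] at hi
    have hii : a i ∈ Set.Icc s t := hmem i (le_of_lt hi)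
    have hii1 : a (i+1) ∈ Set.Icc s t := hmem (i+1) hi
    have haii : a i ≤ a (i+1) := hmono i (i+1) (Nat.le_succ _)
    set y : ℝ := S.g (a i) - S.g s with hy
    set x : ℝ := S.g (a (i+1)) - S.g s with hx
    have hy0 : 0 ≤ y := sub_nonneg.2 (S.g_mono hii.1)
    have hyx : y ≤ x := sub_le_sub_right (S.g_mono haii) _
    have hxy_small : x - y ≤ ε' := by
      have := hδ (a (i+1)) hii1 (a i) hii (by
        rw [Real.dist_eq, abs_of_nonneg (by linarith [hadj i] : (0:ℝ) ≤ a (i+1) - a i)]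
        rw [show a (i+1) - a i = (t-s)/m from hadj i]
        exact hstep)
      rw [Real.dist_eq] at this
      have : |S.g (a (i+1)) - S.g (a i)| < ε' := this
      have hxy : x - y = S.g (a (i+1)) - S.g (a i) := by rw [hx, hy]; ring
      rw [hxy]
      exact le_of_lt (lt_of_le_of_lt (le_abs_self _) this)
    -- integral ≤ x^n * (x - y)
    have h1 : (∫ r in a i..a (i+1), S.k r * (S.g r - S.g s) ^ n)
        ≤ ∫ r in a i..a (i+1), S.k r * x ^ n := by
      refine intervalIntegral.integral_mono_on haii (hginteg _ _)
        ((S.k_ii _ _).mul_const _) ?_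
      intro r hr
      refine mul_le_mul_of_nonneg_left ?_ (S.k_nonneg r)
      refine pow_le_pow_left₀ (sub_nonneg.2 (S.g_mono (hii.1.trans hr.1))) ?_ n
      exact sub_le_sub_right (S.g_mono hr.2) _
    have h2 : (∫ r in a i..a (i+1), S.k r * x ^ n) = x ^ n * (x - y) := by
      rw [intervalIntegral.integral_mul_const]
      rw [show x - y = S.g (a (i+1)) - S.g (a i) by rw [hx, hy]; ring, S.g_sub]
      ring
    have h3 : x ^ n * (x - y) = y ^ n * (x - y) + (x ^ n - y ^ n) * (x - y) := by ring
    have h4 : y ^ n * (x - y) ≤ (x ^ (n+1) - y ^ (n+1)) / ((n:ℝ)+1) := by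
      rw [le_div_iff₀ (by positivity : (0:ℝ) < (n:ℝ)+1)]
      nlinarith [pow_mul_sub_le hy0 hyx n]
    have h5 : (x ^ n - y ^ n) * (x - y) ≤ (x ^ n - y ^ n) * ε' :=
      mul_le_mul_of_nonneg_left hxy_small
        (sub_nonneg.2 (pow_le_pow_left₀ hy0 hyx n))
    calc (∫ r in a i..a (i+1), S.k r * (S.g r - S.g s) ^ n)
        ≤ x ^ n * (x - y) := h1.trans_eq h2
      _ ≤ (x ^ (n+1) - y ^ (n+1)) / ((n:ℝ)+1) + (x ^ n - y ^ n) * ε' := by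
          rw [h3]; exact add_le_add h4 h5
      _ = ((S.g (a (i+1)) - S.g s) ^ (n+1) - (S.g (a i) - S.g s) ^ (n+1)) / (n+1)
          + ((S.g (a (i+1)) - S.g s) ^ n - (S.g (a i) - S.g s) ^ n) * ε' := by
          rw [hx, hy]
  have hsumle := Finset.sum_le_sum hpiece
  -- telescoping
  have htel1 : (∑ i ∈ Finset.range m,
      (((S.g (a (i+1)) - S.g s) ^ (n+1) - (S.g (a i) - S.g s) ^ (n+1)) / ((n:ℝ)+1)))
      = ((S.g t - S.g s) ^ (n+1) - (S.g s - S.g s) ^ (n+1)) / ((n:ℝ)+1) := by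
    rw [← Finset.sum_div, Finset.sum_range_sub (fun i => (S.g (a i) - S.g s) ^ (n+1)), ha0, ham]
  have htel2 : (∑ i ∈ Finset.range m,
      ((S.g (a (i+1)) - S.g s) ^ n - (S.g (a i) - S.g s) ^ n) * ε')
      = ((S.g t - S.g s) ^ n - (S.g s - S.g s) ^ n) * ε' := by
    rw [← Finset.sum_mul, Finset.sum_range_sub (fun i => (S.g (a i) - S.g s) ^ n), ha0, ham]
  rw [Finset.sum_add_distrib, htel1, htel2] at hsumle
  have hfin : ((S.g t - S.g s) ^ n - (S.g s - S.g s) ^ n) * ε' ≤ ε := by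
    have h1 : (S.g t - S.g s) ^ n - (S.g s - S.g s) ^ n ≤ c := by
      have : 0 ≤ (S.g s - S.g s) ^ n := by
        simp only [sub_self]
        positivity
      rw [hc]; linarith
    calc ((S.g t - S.g s) ^ n - (S.g s - S.g s) ^ n) * ε' ≤ (c+1) * ε' := by
          refine mul_le_mul_of_nonneg_right (by linarith) hε'0.le
      _ = ε := by rw [hε']; field_simp
  have hsss : (S.g s - S.g s) ^ (n+1) = 0 := by simp
  rw [hsss, sub_zero] at hsumle
  push_cast
  linarith [hsumle, hfin]

/-! ### Domain, projection, continuity tools -/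

/-- The triangle `Δ`. -/
def Setup.Delta : Set (ℝ × ℝ) := {p : ℝ × ℝ | 0 ≤ p.2 ∧ p.2 ≤ p.1 ∧ p.1 ≤ S.T}

/-- The triangle as a type. -/
abbrev Setup.Dom : Type _ := ↥S.Delta

instance : CompactSpace S.Dom := isCompact_iff_compactSpace.mp <| by
  have hclosed : IsClosed S.Delta := by
    have : S.Delta = {p : ℝ × ℝ | 0 ≤ p.2} ∩ ({p : ℝ × ℝ | p.2 ≤ p.1} ∩ {p : ℝ × ℝ | p.1 ≤ S.T}) := rfl
    rw [this]
    exact (isClosed_le continuous_const continuous_snd).inter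
      ((isClosed_le continuous_snd continuous_fst).inter
        (isClosed_le continuous_fst continuous_const))
  refine IsCompact.of_isClosed_subset (isCompact_Icc (a := ((0:ℝ),(0:ℝ))) (b := (S.T, S.T)))
    hclosed ?_
  rintro ⟨t, s⟩ ⟨h1, h2, h3⟩
  exact ⟨⟨h1.trans h2, h1⟩, ⟨h3, h2.trans h3⟩⟩

instance : Nonempty S.Dom := ⟨⟨((0:ℝ), (0:ℝ)), ⟨le_refl 0, le_refl 0, S.hT.le⟩⟩⟩

/-- Retraction of the plane onto the triangle. -/
def Setup.proj : ℝ × ℝ → S.Dom := fun p =>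
  ⟨(max (max 0 (min p.2 S.T)) (min p.1 S.T), max 0 (min p.2 S.T)), by
    refine ⟨le_max_left _ _, le_max_left _ _, ?_⟩
    exact max_le (max_le S.hT.le (min_le_right _ _)) (min_le_right _ _)⟩

lemma Setup.proj_continuous : Continuous S.proj := by
  apply Continuous.subtype_mk
  fun_prop

lemma Setup.proj_coe {p : ℝ × ℝ} (hp : p ∈ S.Delta) : (S.proj p : ℝ × ℝ) = p := by
  obtain ⟨h1, h2, h3⟩ := hp
  have hs : max 0 (min p.2 S.T) = p.2 := by rw [min_eq_left (h2.trans h3), max_eq_right h1]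
  show ((max (max 0 (min p.2 S.T)) (min p.1 S.T), max 0 (min p.2 S.T)) : ℝ × ℝ) = p
  rw [hs, min_eq_left h3, max_eq_right h2]

lemma Setup.proj_eq {p : ℝ × ℝ} (hp : p ∈ S.Delta) : S.proj p = ⟨p, hp⟩ :=
  Subtype.ext (S.proj_coe hp)

/-- Joint continuity of the semigroup action. -/
lemma Setup.U_tendsto {ι : Type*} {l : Filter ι} {τ : ι → ℝ} {x : ι → X} {τ₀ : ℝ} {x₀ : X}
    (hτ0 : τ₀ ∈ Set.Icc 0 S.T) (hτ : Tendsto τ l (𝓝 τ₀))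
    (hmem : ∀ᶠ i in l, τ i ∈ Set.Icc 0 S.T) (hx : Tendsto x l (𝓝 x₀)) :
    Tendsto (fun i => S.U (τ i) (x i)) l (𝓝 (S.U τ₀ x₀)) := by
  rw [tendsto_iff_norm_sub_tendsto_zero]
  have hxn : Tendsto (fun i => ‖x i - x₀‖) l (𝓝 0) := tendsto_iff_norm_sub_tendsto_zero.mp hx
  have hUx₀ : Tendsto (fun i => ‖S.U (τ i) x₀ - S.U τ₀ x₀‖) l (𝓝 0) := by
    have hcw : Tendsto (fun τ' => S.U τ' x₀) (𝓝[Set.Ici 0] τ₀) (𝓝 (S.U τ₀ x₀)) :=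
      (S.hUcont x₀ τ₀ (Set.mem_Ici.mpr hτ0.1)).tendsto
    have hτ' : Tendsto τ l (𝓝[Set.Ici 0] τ₀) :=
      tendsto_nhdsWithin_iff.mpr ⟨hτ, hmem.mono fun i hi => hi.1⟩
    exact tendsto_iff_norm_sub_tendsto_zero.mp (hcw.comp hτ')
  have hbound : ∀ᶠ i in l,
      ‖S.U (τ i) (x i) - S.U τ₀ x₀‖ ≤ S.M * ‖x i - x₀‖ + ‖S.U (τ i) x₀ - S.U τ₀ x₀‖ := by
    filter_upwards [hmem] with i hi
    have hdec : S.U (τ i) (x i) - S.U τ₀ x₀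
        = S.U (τ i) (x i - x₀) + (S.U (τ i) x₀ - S.U τ₀ x₀) := by
      rw [map_sub]; abel
    rw [hdec]
    exact (norm_add_le _ _).trans (add_le_add (S.norm_U_apply_le hi _) le_rfl)
  have hlim : Tendsto (fun i => S.M * ‖x i - x₀‖ + ‖S.U (τ i) x₀ - S.U τ₀ x₀‖) l (𝓝 0) := by
    have := (hxn.const_mul S.M).add hUx₀
    simpa using this
  exact squeeze_zero' (.of_forall fun i => norm_nonneg _) hbound hlim

lemma aesm_restrict_of_subset {α : Type*} [MeasurableSpace α] {μ : Measure α} {A B : Set α}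
    (hAB : A ⊆ B) (hA : MeasurableSet A) {Y : Type*} [TopologicalSpace Y] {f : α → Y}
    (hf : AEStronglyMeasurable f (μ.restrict B)) :
    AEStronglyMeasurable f (μ.restrict A) := by
  have h : μ.restrict A = (μ.restrict B).restrict A := by
    rw [Measure.restrict_restrict hA, Set.inter_eq_self_of_subset_left hAB]
  rw [h]
  exact hf.restrict

lemma Setup.aesm_U_comp {f : ℝ → ℝ} (hf : Continuous f) {A : Set ℝ} (hA : MeasurableSet A)
    (hf0 : ∀ r ∈ A, 0 ≤ f r) (x : X) :
    AEStronglyMeasurable (fun r => S.U (f r) x) (volume.restrict A) :=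
  ContinuousOn.aestronglyMeasurable
    ((S.hUcont x).comp hf.continuousOn (fun r hr => hf0 r hr)) hA

section CompleteX
variable [CompleteSpace X]

lemma Setup.setIntegral_Ioc_eq_indicator {σt κt : ℝ} (hσ : 0 ≤ σt) (hκ : κt ≤ S.T)
    (W : ℝ → X) :
    ∫ r in Set.Ioc σt κt, W r = ∫ r in Set.Ioc 0 S.T, Set.indicator (Set.Ioc σt κt) W r := by
  have hsub : Set.Ioc σt κt ⊆ Set.Ioc 0 S.T := Set.Ioc_subset_Ioc hσ hκ
  rw [integral_indicator measurableSet_Ioc, Measure.restrict_restrict measurableSet_Ioc,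
    Set.inter_eq_self_of_subset_left hsub]

/-- Dominated-convergence continuity of parameter-dependent integrals with moving endpoints. -/
lemma Setup.cont_int {P : Type*} [TopologicalSpace P] [FirstCountableTopology P]
    {σ κ : P → ℝ} (hσ : Continuous σ) (hκ : Continuous κ)
    (hσ0 : ∀ p, 0 ≤ σ p) (hκT : ∀ p, κ p ≤ S.T)
    {W : P → ℝ → X}
    (hWm : ∀ p, AEStronglyMeasurable (W p) (volume.restrict (Set.Ioc (σ p) (κ p))))
    {b : ℝ → ℝ} (hb : IntegrableOn b (Set.Ioc 0 S.T) volume) (hb0 : ∀ r, 0 ≤ b r)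
    (hWb : ∀ p, ∀ r ∈ Set.Ioc (σ p) (κ p), ‖W p r‖ ≤ b r)
    (hWc : ∀ r : ℝ, ∀ p₀ : P, σ p₀ < r → r < κ p₀ → ContinuousAt (fun p => W p r) p₀) :
    Continuous fun p => ∫ r in Set.Ioc (σ p) (κ p), W p r := by
  have hrw : (fun p => ∫ r in Set.Ioc (σ p) (κ p), W p r)
      = fun p => ∫ r in Set.Ioc 0 S.T, Set.indicator (Set.Ioc (σ p) (κ p)) (W p) r :=
    funext fun p => S.setIntegral_Ioc_eq_indicator (hσ0 p) (hκT p) (W p)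
  rw [continuous_iff_continuousAt]
  intro p₀
  unfold ContinuousAt
  rw [hrw]
  refine tendsto_integral_filter_of_dominated_convergence (μ := volume.restrict (Set.Ioc 0 S.T))
    (bound := b) ?_ ?_ hb ?_
  · refine Filter.Eventually.of_forall fun p => ?_
    rw [aestronglyMeasurable_indicator_iff measurableSet_Ioc,
      Measure.restrict_restrict measurableSet_Ioc,
      Set.inter_eq_self_of_subset_left (Set.Ioc_subset_Ioc (hσ0 p) (hκT p))]
    exact hWm p
  · refine Filter.Eventually.of_forall fun p => ae_of_all _ fun r => ?_
    by_cases hr : r ∈ Set.Ioc (σ p) (κ p)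
    · rw [Set.indicator_of_mem hr]; exact hWb p r hr
    · rw [Set.indicator_of_notMem hr]; simpa using hb0 r
  · have hgood : ∀ᵐ r ∂(volume : Measure ℝ), r ≠ σ p₀ ∧ r ≠ κ p₀ := by
      have h1 : ∀ᵐ r ∂(volume : Measure ℝ), r ≠ σ p₀ := by
        rw [ae_iff]
        have : {a : ℝ | ¬a ≠ σ p₀} = {σ p₀} := by ext a; simp
        rw [this]
        exact measure_singleton _
      have h2 : ∀ᵐ r ∂(volume : Measure ℝ), r ≠ κ p₀ := by
        rw [ae_iff]
        have : {a : ℝ | ¬a ≠ κ p₀} = {κ p₀} := by ext a; simp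
        rw [this]
        exact measure_singleton _
      exact h1.and h2
    filter_upwards [ae_restrict_of_ae hgood] with r hr
    rcases lt_trichotomy r (σ p₀) with hlt | heq | hgt
    · have h0 : Set.indicator (Set.Ioc (σ p₀) (κ p₀)) (W p₀) r = 0 :=
        Set.indicator_of_notMem (fun hc => lt_asymm hlt hc.1) _
      rw [h0]
      refine Tendsto.congr' ?_ tendsto_const_nhds
      filter_upwards [(hσ.tendsto p₀).eventually (eventually_gt_nhds hlt)] with p hp
      exact (Set.indicator_of_notMem (fun hc => lt_asymm hp hc.1) _).symm
    · exact absurd heq hr.1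
    · rcases lt_trichotomy r (κ p₀) with hlt' | heq' | hgt'
      · have hmem : r ∈ Set.Ioc (σ p₀) (κ p₀) := ⟨hgt, hlt'.le⟩
        rw [Set.indicator_of_mem hmem]
        refine Tendsto.congr' ?_ (hWc r p₀ hgt hlt')
        filter_upwards [(hσ.tendsto p₀).eventually (eventually_lt_nhds hgt),
          (hκ.tendsto p₀).eventually (eventually_gt_nhds hlt')] with p hp1 hp2
        exact (Set.indicator_of_mem (Set.mem_Ioc.mpr ⟨hp1, hp2.le⟩) (W p)).symm
      · exact absurd heq' hr.2
      · have h0 : Set.indicator (Set.Ioc (σ p₀) (κ p₀)) (W p₀) r = 0 :=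
          Set.indicator_of_notMem (fun hc => absurd hc.2 (not_le.mpr hgt')) _
        rw [h0]
        refine Tendsto.congr' ?_ tendsto_const_nhds
        filter_upwards [(hκ.tendsto p₀).eventually (eventually_lt_nhds hgt')] with p hp
        exact (Set.indicator_of_notMem (fun hc => absurd hc.2 (not_le.mpr hp)) _).symm

end CompleteX


/-! ### Integrability helpers -/

lemma integrable_apply {α : Type*} [MeasurableSpace α] {μ : Measure α}
    {A : α → (X →L[ℝ] X)} (hA : ∀ x : X, AEStronglyMeasurable (fun a => A a x) μ)
    {C : ℝ} (hC : ∀ᵐ a ∂μ, ‖A a‖ ≤ C) {v : α → X} (hv : Integrable v μ) :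
    Integrable (fun a => A a (v a)) μ := by
  refine Integrable.mono' (hv.norm.const_mul C) (aesm_apply A hA hv.1) ?_
  filter_upwards [hC] with a ha
  exact ((A a).le_opNorm (v a)).trans (mul_le_mul_of_nonneg_right ha (norm_nonneg _))

lemma Setup.aesm_G_restrict {A : Set ℝ} (hA : MeasurableSet A) (hsub : A ⊆ Set.Ioc 0 S.T)
    (x : X) : AEStronglyMeasurable (fun r => S.G r x) (volume.restrict A) :=
  aesm_restrict_of_subset hsub hA (S.hGx x)

lemma Setup.aesm_chain {s t t' : ℝ} (h0s : 0 ≤ s) (htT : t ≤ S.T)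
    (hrange : ∀ r ∈ Set.Ioc s t, 0 ≤ t' - r) {w : ℝ → X}
    (hw : AEStronglyMeasurable w (volume.restrict (Set.Ioc s t))) :
    AEStronglyMeasurable (fun r => S.U (t' - r) (S.G r (w r)))
      (volume.restrict (Set.Ioc s t)) :=
  aesm_apply (fun r => S.U (t' - r))
    (fun x => S.aesm_U_comp (by fun_prop) measurableSet_Ioc hrange x)
    (aesm_apply S.G (fun x => S.aesm_G_restrict measurableSet_Ioc
      (Set.Ioc_subset_Ioc h0s htT) x) hw)

lemma Setup.integrableOn_G_apply {s t : ℝ} (h0s : 0 ≤ s) (htT : t ≤ S.T) {w : ℝ → X}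
    (hw : AEStronglyMeasurable w (volume.restrict (Set.Ioc s t)))
    {C : ℝ} (hC : ∀ r ∈ Set.Ioc s t, ‖w r‖ ≤ C) :
    IntegrableOn (fun r => S.G r (w r)) (Set.Ioc s t) volume := by
  have hmeas : AEStronglyMeasurable (fun r => S.G r (w r)) (volume.restrict (Set.Ioc s t)) :=
    aesm_apply S.G (fun x => S.aesm_G_restrict measurableSet_Ioc
      (Set.Ioc_subset_Ioc h0s htT) x) hw
  refine Integrable.mono' ((S.k_int.restrict (s := Set.Ioc s t)).const_mul C) hmeas ?_
  filter_upwards [ae_restrict_mem measurableSet_Ioc] with r hr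
  have hk : S.k r = ‖S.G r‖ := S.k_eq (Set.Ioc_subset_Ioc h0s htT hr)
  calc ‖S.G r (w r)‖ ≤ ‖S.G r‖ * ‖w r‖ := (S.G r).le_opNorm _
    _ ≤ ‖S.G r‖ * C := mul_le_mul_of_nonneg_left (hC r hr) (norm_nonneg _)
    _ = C * S.k r := by rw [hk]; ring

lemma Setup.integrableOn_UG {s t t' : ℝ} (h0s : 0 ≤ s) (htT : t ≤ S.T)
    (htt' : t ≤ t') (ht'T : t' ≤ S.T) {w : ℝ → X}
    (hw : AEStronglyMeasurable w (volume.restrict (Set.Ioc s t)))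
    {C : ℝ} (hC : ∀ r ∈ Set.Ioc s t, ‖w r‖ ≤ C) :
    IntegrableOn (fun r => S.U (t' - r) (S.G r (w r))) (Set.Ioc s t) volume := by
  have hrange : ∀ r ∈ Set.Ioc s t, 0 ≤ t' - r := fun r hr => by
    have := hr.2; linarith
  refine integrable_apply (A := fun r => S.U (t' - r))
    (fun x => S.aesm_U_comp (by fun_prop) measurableSet_Ioc hrange x) (C := S.M)
    ?_ (S.integrableOn_G_apply h0s htT hw hC)
  filter_upwards [ae_restrict_mem measurableSet_Ioc] with r hr
  refine S.hM _ ⟨hrange r hr, ?_⟩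
  have h0r : 0 ≤ r := h0s.trans hr.1.le
  linarith

lemma Setup.integrableOn_k_mul {s t : ℝ} {f : ℝ → ℝ} (hf : Continuous f) :
    IntegrableOn (fun r => S.k r * f r) (Set.Ioc s t) volume :=
  ((S.k_ii s t).mul_continuousOn hf.continuousOn).1

/-! ### The Picard map -/

section CompleteX2
variable [CompleteSpace X]

/-- The Picard map `Φ_y` on `C(Δ, X)`. -/
noncomputable def Setup.Phi (y : X) (u : C(S.Dom, X)) : C(S.Dom, X) :=
  ContinuousMap.mk
    (fun q => S.U ((q : ℝ × ℝ).1 - (q : ℝ × ℝ).2) y +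
      ∫ r in Set.Ioc (q : ℝ × ℝ).2 (q : ℝ × ℝ).1,
        S.U ((q : ℝ × ℝ).1 - r) (S.G r (u (S.proj (r, (q : ℝ × ℝ).2)))))
    (by
      have hfst : Continuous fun q : S.Dom => (q : ℝ × ℝ).1 :=
        continuous_fst.comp continuous_subtype_val
      have hsnd : Continuous fun q : S.Dom => (q : ℝ × ℝ).2 :=
        continuous_snd.comp continuous_subtype_val
      refine Continuous.add ?_ ?_
      · refine (S.hUcont y).comp_continuous (hfst.sub hsnd) fun q => ?_
        exact Set.mem_Ici.mpr (sub_nonneg.2 q.2.2.1)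
      · refine S.cont_int (σ := fun q : S.Dom => (q : ℝ × ℝ).2)
          (κ := fun q : S.Dom => (q : ℝ × ℝ).1) hsnd hfst (fun q => q.2.1)
          (fun q => q.2.2.2)
          (W := fun q r => S.U ((q : ℝ × ℝ).1 - r) (S.G r (u (S.proj (r, (q : ℝ × ℝ).2)))))
          ?_ (b := fun r => S.M * ‖u‖ * S.k r)
          ((S.k_int.restrict).const_mul _) (fun r => mul_nonneg (mul_nonneg S.M_pos.le (norm_nonneg u)) (S.k_nonneg r)) ?_ ?_
        · intro q
          refine S.aesm_chain q.2.1 q.2.2.2 (fun r hr => by linarith [hr.2]) ?_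
          exact (u.continuous.comp (S.proj_continuous.comp
            (Continuous.prodMk_left _))).aestronglyMeasurable
        · intro q r hr
          have h0r : 0 ≤ r := q.2.1.trans hr.1.le
          have hU : ‖S.U ((q : ℝ × ℝ).1 - r) (S.G r (u (S.proj (r, (q : ℝ × ℝ).2))))‖
              ≤ S.M * ‖S.G r (u (S.proj (r, (q : ℝ × ℝ).2)))‖ :=
            S.norm_U_apply_le ⟨by linarith [hr.2], by linarith [q.2.2.2, hr.2]⟩ _
          have hk : S.k r = ‖S.G r‖ :=
            S.k_eq ⟨q.2.1.trans_lt hr.1, hr.2.trans q.2.2.2⟩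
          calc ‖S.U ((q : ℝ × ℝ).1 - r) (S.G r (u (S.proj (r, (q : ℝ × ℝ).2))))‖
              ≤ S.M * ‖S.G r (u (S.proj (r, (q : ℝ × ℝ).2)))‖ := hU
            _ ≤ S.M * (‖S.G r‖ * ‖u (S.proj (r, (q : ℝ × ℝ).2))‖) :=
                mul_le_mul_of_nonneg_left ((S.G r).le_opNorm _) (by linarith [S.M_pos])
            _ ≤ S.M * (‖S.G r‖ * ‖u‖) :=
                mul_le_mul_of_nonneg_left (mul_le_mul_of_nonneg_left
                  (u.norm_coe_le_norm _) (norm_nonneg _)) S.M_pos.le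
            _ = S.M * ‖u‖ * S.k r := by rw [hk]; ring
        · intro r q₀ h1 h2
          have hτ : Tendsto (fun q : S.Dom => (q : ℝ × ℝ).1 - r) (𝓝 q₀)
              (𝓝 ((q₀ : ℝ × ℝ).1 - r)) := ((hfst.sub continuous_const).tendsto q₀)
          have hmem : ∀ᶠ q : S.Dom in 𝓝 q₀, (q : ℝ × ℝ).1 - r ∈ Set.Icc 0 S.T := by
            filter_upwards [(hfst.tendsto q₀).eventually (eventually_gt_nhds h2)] with q hq
            have h0r : 0 < r := lt_of_le_of_lt q₀.2.1 h1
            exact ⟨by linarith, by linarith [q.2.2.2]⟩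
          have hcont : Continuous fun q : S.Dom => S.G r (u (S.proj (r, (q : ℝ × ℝ).2))) :=
            (S.G r).continuous.comp <| u.continuous.comp <| S.proj_continuous.comp <|
              continuous_const.prodMk hsnd
          have hx : Tendsto (fun q : S.Dom => S.G r (u (S.proj (r, (q : ℝ × ℝ).2))))
              (𝓝 q₀) (𝓝 (S.G r (u (S.proj (r, (q₀ : ℝ × ℝ).2))))) := hcont.tendsto q₀
          have h1' : ((q₀ : ℝ × ℝ)).2 < r := h1
          have h2' : r < ((q₀ : ℝ × ℝ)).1 := h2
          exact S.U_tendsto ⟨by linarith, by linarith [q₀.2.2.2, q₀.2.1]⟩ hτ hmem hx)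

lemma Setup.Phi_apply (y : X) (u : C(S.Dom, X)) (q : S.Dom) :
    S.Phi y u q = S.U ((q : ℝ × ℝ).1 - (q : ℝ × ℝ).2) y +
      ∫ r in Set.Ioc (q : ℝ × ℝ).2 (q : ℝ × ℝ).1,
        S.U ((q : ℝ × ℝ).1 - r) (S.G r (u (S.proj (r, (q : ℝ × ℝ).2)))) := rfl

end CompleteX2

section FixedPoint
variable [CompleteSpace X]

lemma Setup.integral_k {s t : ℝ} (hst : s ≤ t) :
    ∫ r in Set.Ioc s t, S.k r = S.g t - S.g s := by
  rw [← intervalIntegral.integral_of_le hst, ← S.g_sub]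

lemma Setup.cont_proj_snd (u : C(S.Dom, X)) (s : ℝ) :
    Continuous fun r : ℝ => u (S.proj (r, s)) :=
  u.continuous.comp <| S.proj_continuous.comp <| continuous_id.prodMk continuous_const

lemma Setup.integrableOn_UG_proj (u : C(S.Dom, X)) (q : S.Dom) :
    IntegrableOn (fun r => S.U ((q : ℝ × ℝ).1 - r) (S.G r (u (S.proj (r, (q : ℝ × ℝ).2)))))
      (Set.Ioc (q : ℝ × ℝ).2 (q : ℝ × ℝ).1) volume :=
  S.integrableOn_UG q.2.1 q.2.2.2 le_rfl q.2.2.2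
    ((S.cont_proj_snd u _).aestronglyMeasurable) (fun r _ => u.norm_coe_le_norm _)

lemma Setup.Phi_sub_apply (y : X) (u v : C(S.Dom, X)) (q : S.Dom) :
    S.Phi y u q - S.Phi y v q = ∫ r in Set.Ioc (q : ℝ × ℝ).2 (q : ℝ × ℝ).1,
      S.U ((q : ℝ × ℝ).1 - r)
        (S.G r (u (S.proj (r, (q : ℝ × ℝ).2)) - v (S.proj (r, (q : ℝ × ℝ).2)))) := by
  rw [S.Phi_apply, S.Phi_apply, add_sub_add_left_eq_sub,
    ← integral_sub (S.integrableOn_UG_proj u q) (S.integrableOn_UG_proj v q)]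
  refine setIntegral_congr_fun measurableSet_Ioc fun r _ => ?_
  rw [← map_sub, ← map_sub]

lemma Setup.iter_bound (y : X) (u v : C(S.Dom, X)) :
    ∀ n : ℕ, ∀ q : S.Dom, ‖(S.Phi y)^[n] u q - (S.Phi y)^[n] v q‖
      ≤ S.M ^ n * (S.g (q : ℝ × ℝ).1 - S.g (q : ℝ × ℝ).2) ^ n / n.factorial * ‖u - v‖ := by
  intro n
  induction n with
  | zero =>
    intro q
    simpa using ((u - v).norm_coe_le_norm q).trans_eq (by norm_num)
  | succ n ih =>
    intro q
    rw [Function.iterate_succ_apply', Function.iterate_succ_apply', S.Phi_sub_apply]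
    set u' := (S.Phi y)^[n] u with hu'
    set v' := (S.Phi y)^[n] v with hv'
    have h0s : (0:ℝ) ≤ (q : ℝ × ℝ).2 := q.2.1
    have hst : (q : ℝ × ℝ).2 ≤ (q : ℝ × ℝ).1 := q.2.2.1
    have htT : (q : ℝ × ℝ).1 ≤ S.T := q.2.2.2
    have hw : ∀ r ∈ Set.Ioc (q : ℝ × ℝ).2 (q : ℝ × ℝ).1,
        ‖u' (S.proj (r, (q : ℝ × ℝ).2)) - v' (S.proj (r, (q : ℝ × ℝ).2))‖
          ≤ S.M ^ n * (S.g r - S.g (q : ℝ × ℝ).2) ^ n / n.factorial * ‖u - v‖ := by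
      intro r hr
      have hmem : ((r, (q : ℝ × ℝ).2) : ℝ × ℝ) ∈ S.Delta :=
        ⟨h0s, hr.1.le, hr.2.trans htT⟩
      have hco : ((S.proj (r, (q : ℝ × ℝ).2)) : ℝ × ℝ) = (r, (q : ℝ × ℝ).2) :=
        S.proj_coe hmem
      have := ih (S.proj (r, (q : ℝ × ℝ).2))
      rw [hco] at this
      simpa using this
    have hbound : ∀ r ∈ Set.Ioc (q : ℝ × ℝ).2 (q : ℝ × ℝ).1,
        ‖S.U ((q : ℝ × ℝ).1 - r)
          (S.G r (u' (S.proj (r, (q : ℝ × ℝ).2)) - v' (S.proj (r, (q : ℝ × ℝ).2))))‖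
        ≤ (S.M ^ (n+1) / n.factorial * ‖u - v‖)
            * (S.k r * (S.g r - S.g (q : ℝ × ℝ).2) ^ n) := by
      intro r hr
      have hk : S.k r = ‖S.G r‖ := S.k_eq ⟨h0s.trans_lt hr.1, hr.2.trans htT⟩
      have h1 : ‖S.U ((q : ℝ × ℝ).1 - r)
          (S.G r (u' (S.proj (r, (q : ℝ × ℝ).2)) - v' (S.proj (r, (q : ℝ × ℝ).2))))‖
          ≤ S.M * ‖S.G r (u' (S.proj (r, (q : ℝ × ℝ).2)) - v' (S.proj (r, (q : ℝ × ℝ).2)))‖ :=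
        S.norm_U_apply_le ⟨by linarith [hr.2], by linarith [hr.1]⟩ _
      have h2 : ‖S.G r (u' (S.proj (r, (q : ℝ × ℝ).2)) - v' (S.proj (r, (q : ℝ × ℝ).2)))‖
          ≤ S.k r * ‖u' (S.proj (r, (q : ℝ × ℝ).2)) - v' (S.proj (r, (q : ℝ × ℝ).2))‖ := by
        rw [hk]; exact (S.G r).le_opNorm _
      have h3 := hw r hr
      have hM0 : (0:ℝ) ≤ S.M := S.M_pos.le
      have hk0 : (0:ℝ) ≤ S.k r := S.k_nonneg r
      calc ‖S.U ((q : ℝ × ℝ).1 - r)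
              (S.G r (u' (S.proj (r, (q : ℝ × ℝ).2)) - v' (S.proj (r, (q : ℝ × ℝ).2))))‖
          ≤ S.M * (S.k r * ‖u' (S.proj (r, (q : ℝ × ℝ).2)) - v' (S.proj (r, (q : ℝ × ℝ).2))‖) :=
            h1.trans (mul_le_mul_of_nonneg_left h2 hM0)
        _ ≤ S.M * (S.k r * (S.M ^ n * (S.g r - S.g (q : ℝ × ℝ).2) ^ n / n.factorial * ‖u - v‖)) :=
            mul_le_mul_of_nonneg_left (mul_le_mul_of_nonneg_left h3 hk0) hM0
        _ = (S.M ^ (n+1) / n.factorial * ‖u - v‖)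
              * (S.k r * (S.g r - S.g (q : ℝ × ℝ).2) ^ n) := by ring
    have hint1 : IntegrableOn (fun r => S.U ((q : ℝ × ℝ).1 - r)
        (S.G r (u' (S.proj (r, (q : ℝ × ℝ).2)) - v' (S.proj (r, (q : ℝ × ℝ).2)))))
        (Set.Ioc (q : ℝ × ℝ).2 (q : ℝ × ℝ).1) volume := by
      have h := (S.integrableOn_UG_proj u' q).sub (S.integrableOn_UG_proj v' q)
      refine h.congr (Filter.Eventually.of_forall fun r => ?_)
      rw [Pi.sub_apply, ← map_sub, ← map_sub]
    have hint2 : IntegrableOn (fun r => (S.M ^ (n+1) / n.factorial * ‖u - v‖)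
        * (S.k r * (S.g r - S.g (q : ℝ × ℝ).2) ^ n))
        (Set.Ioc (q : ℝ × ℝ).2 (q : ℝ × ℝ).1) volume :=
      (S.integrableOn_k_mul ((S.g_cont.sub continuous_const).pow n)).const_mul _
    calc ‖∫ r in Set.Ioc (q : ℝ × ℝ).2 (q : ℝ × ℝ).1,
            S.U ((q : ℝ × ℝ).1 - r)
              (S.G r (u' (S.proj (r, (q : ℝ × ℝ).2)) - v' (S.proj (r, (q : ℝ × ℝ).2))))‖
        ≤ ∫ r in Set.Ioc (q : ℝ × ℝ).2 (q : ℝ × ℝ).1,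
            ‖S.U ((q : ℝ × ℝ).1 - r)
              (S.G r (u' (S.proj (r, (q : ℝ × ℝ).2)) - v' (S.proj (r, (q : ℝ × ℝ).2))))‖ :=
          norm_integral_le_integral_norm _
      _ ≤ ∫ r in Set.Ioc (q : ℝ × ℝ).2 (q : ℝ × ℝ).1,
            (S.M ^ (n+1) / n.factorial * ‖u - v‖)
              * (S.k r * (S.g r - S.g (q : ℝ × ℝ).2) ^ n) :=
          setIntegral_mono_on hint1.norm hint2 measurableSet_Ioc hbound
      _ = (S.M ^ (n+1) / n.factorial * ‖u - v‖)
            * ∫ r in Set.Ioc (q : ℝ × ℝ).2 (q : ℝ × ℝ).1,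
              S.k r * (S.g r - S.g (q : ℝ × ℝ).2) ^ n := integral_const_mul _ _
      _ ≤ (S.M ^ (n+1) / n.factorial * ‖u - v‖)
            * ((S.g (q : ℝ × ℝ).1 - S.g (q : ℝ × ℝ).2) ^ (n+1) / (n+1)) := by
          refine mul_le_mul_of_nonneg_left ?_
            (mul_nonneg (div_nonneg (pow_nonneg S.M_pos.le _) (Nat.cast_nonneg _))
              (norm_nonneg _))
          rw [← intervalIntegral.integral_of_le hst]
          exact S.core hst n
      _ = S.M ^ (n+1) * (S.g (q : ℝ × ℝ).1 - S.g (q : ℝ × ℝ).2) ^ (n+1) / (n+1).factorial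
            * ‖u - v‖ := by
          rw [Nat.factorial_succ]
          have hn : ((n.factorial : ℝ)) ≠ 0 := Nat.cast_ne_zero.mpr (Nat.factorial_pos n).ne'
          field_simp
          push_cast
          ring

lemma Setup.iter_norm_le (y : X) (u v : C(S.Dom, X)) (n : ℕ) :
    ‖(S.Phi y)^[n] u - (S.Phi y)^[n] v‖ ≤ (S.M * S.K) ^ n / n.factorial * ‖u - v‖ := by
  have hc : (0:ℝ) ≤ (S.M * S.K) ^ n / n.factorial * ‖u - v‖ := by
    have := S.K_nonneg
    have := S.M_pos.le
    positivity
  refine (ContinuousMap.norm_le _ hc).mpr fun q => ?_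
  rw [ContinuousMap.sub_apply]
  refine (S.iter_bound y u v n q).trans ?_
  have h1 : S.g (q : ℝ × ℝ).1 - S.g (q : ℝ × ℝ).2 ≤ S.K := by
    unfold Setup.K
    have := S.g_mono q.2.2.2
    have := S.g_mono q.2.1
    linarith
  have h2 : (0:ℝ) ≤ S.g (q : ℝ × ℝ).1 - S.g (q : ℝ × ℝ).2 := sub_nonneg.2 (S.g_mono q.2.2.1)
  have h3 : (S.g (q : ℝ × ℝ).1 - S.g (q : ℝ × ℝ).2) ^ n ≤ S.K ^ n := pow_le_pow_left₀ h2 h1 n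
  rw [mul_pow]
  have hM0 : (0:ℝ) ≤ S.M ^ n := pow_nonneg S.M_pos.le n
  have hfac : (0:ℝ) < n.factorial := Nat.cast_pos.mpr (Nat.factorial_pos n)
  gcongr

lemma Setup.Phi_norm_le (y : X) (u : C(S.Dom, X)) :
    ‖S.Phi y u‖ ≤ S.M * ‖y‖ + S.M * S.K * ‖u‖ := by
  have hc : (0:ℝ) ≤ S.M * ‖y‖ + S.M * S.K * ‖u‖ := by
    have := S.K_nonneg; have := S.M_pos.le; positivity
  refine (ContinuousMap.norm_le _ hc).mpr fun q => ?_
  rw [S.Phi_apply]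
  have h0s : (0:ℝ) ≤ (q : ℝ × ℝ).2 := q.2.1
  have hst : (q : ℝ × ℝ).2 ≤ (q : ℝ × ℝ).1 := q.2.2.1
  have htT : (q : ℝ × ℝ).1 ≤ S.T := q.2.2.2
  refine (norm_add_le _ _).trans (add_le_add ?_ ?_)
  · exact S.norm_U_apply_le ⟨sub_nonneg.2 hst, by linarith⟩ y
  · have hbound : ∀ r ∈ Set.Ioc (q : ℝ × ℝ).2 (q : ℝ × ℝ).1,
        ‖S.U ((q : ℝ × ℝ).1 - r) (S.G r (u (S.proj (r, (q : ℝ × ℝ).2))))‖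
          ≤ (S.M * ‖u‖) * S.k r := by
      intro r hr
      have hk : S.k r = ‖S.G r‖ := S.k_eq ⟨h0s.trans_lt hr.1, hr.2.trans htT⟩
      have h1 := S.norm_U_apply_le (τ := (q : ℝ × ℝ).1 - r)
        ⟨by linarith [hr.2], by linarith [hr.1]⟩ (S.G r (u (S.proj (r, (q : ℝ × ℝ).2))))
      have h2 : ‖S.G r (u (S.proj (r, (q : ℝ × ℝ).2)))‖ ≤ S.k r * ‖u‖ := by
        rw [hk]
        exact ((S.G r).le_opNorm _).trans
          (mul_le_mul_of_nonneg_left (u.norm_coe_le_norm _) (norm_nonneg _))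
      calc ‖S.U ((q : ℝ × ℝ).1 - r) (S.G r (u (S.proj (r, (q : ℝ × ℝ).2))))‖
          ≤ S.M * (S.k r * ‖u‖) := h1.trans (mul_le_mul_of_nonneg_left h2 S.M_pos.le)
        _ = (S.M * ‖u‖) * S.k r := by ring
    calc ‖∫ r in Set.Ioc (q : ℝ × ℝ).2 (q : ℝ × ℝ).1,
            S.U ((q : ℝ × ℝ).1 - r) (S.G r (u (S.proj (r, (q : ℝ × ℝ).2))))‖
        ≤ ∫ r in Set.Ioc (q : ℝ × ℝ).2 (q : ℝ × ℝ).1,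
            ‖S.U ((q : ℝ × ℝ).1 - r) (S.G r (u (S.proj (r, (q : ℝ × ℝ).2))))‖ :=
          norm_integral_le_integral_norm _
      _ ≤ ∫ r in Set.Ioc (q : ℝ × ℝ).2 (q : ℝ × ℝ).1, (S.M * ‖u‖) * S.k r :=
          setIntegral_mono_on (S.integrableOn_UG_proj u q).norm
            ((S.k_int.restrict).const_mul _) measurableSet_Ioc hbound
      _ = (S.M * ‖u‖) * (S.g (q : ℝ × ℝ).1 - S.g (q : ℝ × ℝ).2) := by
          rw [integral_const_mul, S.integral_k hst]
      _ ≤ S.M * S.K * ‖u‖ := by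
          have h1 : S.g (q : ℝ × ℝ).1 - S.g (q : ℝ × ℝ).2 ≤ S.K := by
            unfold Setup.K
            have := S.g_mono htT
            have := S.g_mono h0s
            linarith
          have h2 : (0:ℝ) ≤ S.M * ‖u‖ := mul_nonneg S.M_pos.le (norm_nonneg _)
          nlinarith [norm_nonneg u, S.M_pos.le]

end FixedPoint

section ExistsT
variable [CompleteSpace X]

lemma Setup.exists_T :
    ∃ 𝕋 : ℝ → ℝ → (X →L[ℝ] X), ∃ C : ℝ, 0 ≤ C ∧
      (∀ t s : ℝ, ‖𝕋 t s‖ ≤ C) ∧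
      (∀ y : X, Continuous fun p : ℝ × ℝ => 𝕋 p.1 p.2 y) ∧
      (∀ s t : ℝ, 0 ≤ s → s ≤ t → t ≤ S.T → ∀ y : X,
        𝕋 t s y = S.U (t - s) y + ∫ r in Set.Ioc s t, S.U (t - r) (S.G r (𝕋 r s y))) := by
  obtain ⟨n₀, hn₀⟩ : ∃ n : ℕ, (S.M * S.K) ^ n / n.factorial < 1 := by
    have h := FloorSemiring.tendsto_pow_div_factorial_atTop (K := ℝ) (S.M * S.K)
    exact (h.eventually (gt_mem_nhds one_pos)).exists
  set c : ℝ := (S.M * S.K) ^ n₀ / n₀.factorial with hc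
  have hc0 : 0 ≤ c :=
    div_nonneg (pow_nonneg (mul_nonneg S.M_pos.le S.K_nonneg) _) (Nat.cast_nonneg _)
  set κ : NNReal := Real.toNNReal c with hκ
  have hκc : (κ : ℝ) = c := Real.coe_toNNReal c hc0
  have hcw : ∀ y : X, ContractingWith κ (fun u => (S.Phi y)^[n₀] u) := by
    intro y
    constructor
    · have h1 : (κ : ℝ) < 1 := by rw [hκc]; exact hn₀
      exact_mod_cast h1
    · refine LipschitzWith.of_dist_le_mul fun u v => ?_
      rw [dist_eq_norm, dist_eq_norm, hκc]
      exact S.iter_norm_le y u v n₀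
  set uu : X → C(S.Dom, X) := fun y => ContractingWith.fixedPoint _ (hcw y) with huu
  have hfixF : ∀ y, (S.Phi y)^[n₀] (uu y) = uu y := fun y => (hcw y).fixedPoint_isFixedPt
  have hfix : ∀ y, S.Phi y (uu y) = uu y := by
    intro y
    have hfp : Function.IsFixedPt (fun u => (S.Phi y)^[n₀] u) (S.Phi y (uu y)) := by
      show (S.Phi y)^[n₀] (S.Phi y (uu y)) = S.Phi y (uu y)
      rw [← Function.iterate_succ_apply, Function.iterate_succ_apply', hfixF y]
    exact (hcw y).fixedPoint_unique' hfp (hcw y).fixedPoint_isFixedPt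
  have huniq : ∀ (y : X) (w : C(S.Dom, X)), S.Phi y w = w → w = uu y := fun y w hw =>
    (hcw y).fixedPoint_unique' (Function.IsFixedPt.iterate hw n₀)
      (hcw y).fixedPoint_isFixedPt
  have hlin : ∀ (a : ℝ) (y z : X), uu (a • y + z) = a • uu y + uu z := by
    intro a y z
    refine (huniq _ _ ?_).symm
    ext q
    rw [S.Phi_apply]
    have hin : (fun r => S.U ((q : ℝ × ℝ).1 - r)
        (S.G r ((a • uu y + uu z) (S.proj (r, (q : ℝ × ℝ).2)))))
        = fun r => a • S.U ((q : ℝ × ℝ).1 - r) (S.G r (uu y (S.proj (r, (q : ℝ × ℝ).2))))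
            + S.U ((q : ℝ × ℝ).1 - r) (S.G r (uu z (S.proj (r, (q : ℝ × ℝ).2)))) := by
      funext r
      show S.U _ (S.G r (a • uu y (S.proj (r, (q : ℝ × ℝ).2)) + uu z (S.proj (r, (q : ℝ × ℝ).2)))) = _
      simp only [map_add, _root_.map_smul]
    have hi1 : IntegrableOn (fun r => a • S.U ((q : ℝ × ℝ).1 - r)
        (S.G r (uu y (S.proj (r, (q : ℝ × ℝ).2))))) (Set.Ioc (q : ℝ × ℝ).2 (q : ℝ × ℝ).1)
        volume := (S.integrableOn_UG_proj (uu y) q).smul a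
    rw [hin, integral_add hi1 (S.integrableOn_UG_proj (uu z) q), integral_smul]
    have hy := DFunLike.congr_fun (hfix y) q
    have hz := DFunLike.congr_fun (hfix z) q
    rw [S.Phi_apply] at hy hz
    show _ = a • uu y q + uu z q
    rw [← hy, ← hz, map_add, _root_.map_smul, smul_add]
    abel
  have hzero : uu 0 = 0 := by
    refine (huniq 0 0 ?_).symm
    ext q
    rw [S.Phi_apply]
    show S.U _ (0 : X) + ∫ r in _, S.U _ (S.G r ((0 : C(S.Dom, X)) (S.proj (r, (q : ℝ × ℝ).2)))) = _
    simp
  have hFn : ∀ n : ℕ, ∃ cb : ℝ, 0 ≤ cb ∧ ∀ y : X, ‖(S.Phi y)^[n] (0 : C(S.Dom, X))‖ ≤ cb * ‖y‖ := by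
    intro n
    induction n with
    | zero => exact ⟨0, le_rfl, fun y => by simp⟩
    | succ n ih =>
      obtain ⟨cb, hcb0, hcb⟩ := ih
      have hK := S.K_nonneg
      have hM := S.M_pos.le
      refine ⟨S.M + S.M * S.K * cb, by positivity, fun y => ?_⟩
      rw [Function.iterate_succ_apply']
      refine (S.Phi_norm_le y _).trans ?_
      have h := hcb y
      have h2 : S.M * S.K * ‖(S.Phi y)^[n] (0 : C(S.Dom, X))‖ ≤ S.M * S.K * (cb * ‖y‖) :=
        mul_le_mul_of_nonneg_left h (mul_nonneg hM hK)
      nlinarith [h2, norm_nonneg y]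
  obtain ⟨c₀, hc₀0, hc₀⟩ := hFn n₀
  have h1c : 0 < 1 - c := by linarith
  have hCtotal : ∀ y, ‖uu y‖ ≤ (c₀ / (1 - c)) * ‖y‖ := by
    intro y
    have h1 : ‖uu y - (S.Phi y)^[n₀] 0‖ ≤ c * ‖uu y‖ := by
      have h2 := S.iter_norm_le y (uu y) 0 n₀
      rw [hfixF y] at h2
      simpa using h2
    have h4 : ‖uu y‖ ≤ ‖uu y - (S.Phi y)^[n₀] 0‖ + ‖(S.Phi y)^[n₀] 0‖ := by
      calc ‖uu y‖ = ‖(uu y - (S.Phi y)^[n₀] 0) + (S.Phi y)^[n₀] 0‖ := by rw [sub_add_cancel]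
        _ ≤ _ := norm_add_le _ _
    have h5 : (1 - c) * ‖uu y‖ ≤ c₀ * ‖y‖ := by nlinarith [hc₀ y]
    have h6 : c₀ / (1 - c) * ‖y‖ = c₀ * ‖y‖ / (1 - c) := by ring
    rw [h6, le_div_iff₀ h1c]
    nlinarith
  set C : ℝ := c₀ / (1 - c) with hCdef
  have hC0 : 0 ≤ C := div_nonneg hc₀0 h1c.le
  refine ⟨fun t s => LinearMap.mkContinuous
    { toFun := fun y => uu y (S.proj (t, s))
      map_add' := fun y z => by
        have h := hlin 1 y z
        rw [one_smul, one_smul] at h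
        show uu (y + z) (S.proj (t, s)) = uu y (S.proj (t, s)) + uu z (S.proj (t, s))
        rw [h]
        rfl
      map_smul' := fun a y => by
        have h := hlin a y 0
        rw [hzero, add_zero, add_zero] at h
        show uu (a • y) (S.proj (t, s)) = a • uu y (S.proj (t, s))
        rw [h]
        rfl }
    C (fun y => (ContinuousMap.norm_coe_le_norm _ _).trans (hCtotal y)), C, hC0, ?_, ?_, ?_⟩
  · intro t s
    exact LinearMap.mkContinuous_norm_le _ hC0 _
  · intro y
    show Continuous fun p : ℝ × ℝ => uu y (S.proj (p.1, p.2))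
    exact (uu y).continuous.comp S.proj_continuous
  · intro s t h0s hst htT y
    have hmem : ((t, s) : ℝ × ℝ) ∈ S.Delta := ⟨h0s, hst, htT⟩
    have hq : S.proj (t, s) = (⟨(t, s), hmem⟩ : S.Dom) := S.proj_eq hmem
    show uu y (S.proj (t, s)) = _
    rw [hq]
    have h := DFunLike.congr_fun (hfix y) (⟨(t, s), hmem⟩ : S.Dom)
    rw [S.Phi_apply] at h
    exact h.symm

end ExistsT

section Uniq
variable [CompleteSpace X]

lemma Setup.uniq1 {a : ℝ} (h0a : 0 ≤ a) {x : X} {v w : ℝ → X}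
    (hv : ContinuousOn v (Set.Icc a S.T)) (hw : ContinuousOn w (Set.Icc a S.T))
    (hveq : ∀ t ∈ Set.Icc a S.T,
      v t = S.U (t - a) x + ∫ r in Set.Ioc a t, S.U (t - r) (S.G r (v r)))
    (hweq : ∀ t ∈ Set.Icc a S.T,
      w t = S.U (t - a) x + ∫ r in Set.Ioc a t, S.U (t - r) (S.G r (w r))) :
    Set.EqOn v w (Set.Icc a S.T) := by
  rcases le_or_gt a S.T with haT | haT
  swap
  · intro t ht
    exact absurd (ht.1.trans ht.2) (not_le.mpr haT)
  obtain ⟨B, hB⟩ := IsCompact.exists_bound_of_continuousOn isCompact_Icc (hv.sub hw)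
  have hB' : ∀ t ∈ Set.Icc a S.T, ‖v t - w t‖ ≤ B := fun t ht => by
    simpa using hB t ht
  have hBnn : 0 ≤ B := le_trans (norm_nonneg _) (hB' a ⟨le_refl a, haT⟩)
  -- measurability and boundedness of v, w on subintervals
  have hvm : ∀ t ∈ Set.Icc a S.T, AEStronglyMeasurable v (volume.restrict (Set.Ioc a t)) :=
    fun t ht => aesm_restrict_of_subset
      (fun r (hr : r ∈ Set.Ioc a t) => Set.mem_Icc.mpr ⟨hr.1.le, hr.2.trans ht.2⟩)
      measurableSet_Ioc (hv.aestronglyMeasurable measurableSet_Icc)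
  have hwm : ∀ t ∈ Set.Icc a S.T, AEStronglyMeasurable w (volume.restrict (Set.Ioc a t)) :=
    fun t ht => aesm_restrict_of_subset
      (fun r (hr : r ∈ Set.Ioc a t) => Set.mem_Icc.mpr ⟨hr.1.le, hr.2.trans ht.2⟩)
      measurableSet_Ioc (hw.aestronglyMeasurable measurableSet_Icc)
  obtain ⟨Cv, hCv⟩ := IsCompact.exists_bound_of_continuousOn isCompact_Icc hv
  obtain ⟨Cw, hCw⟩ := IsCompact.exists_bound_of_continuousOn isCompact_Icc hw
  have hiv : ∀ t ∈ Set.Icc a S.T,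
      IntegrableOn (fun r => S.U (t - r) (S.G r (v r))) (Set.Ioc a t) volume := fun t ht =>
    S.integrableOn_UG h0a ht.2 le_rfl ht.2 (hvm t ht)
      (fun r hr => hCv r ⟨hr.1.le, hr.2.trans ht.2⟩)
  have hiw : ∀ t ∈ Set.Icc a S.T,
      IntegrableOn (fun r => S.U (t - r) (S.G r (w r))) (Set.Ioc a t) volume := fun t ht =>
    S.integrableOn_UG h0a ht.2 le_rfl ht.2 (hwm t ht)
      (fun r hr => hCw r ⟨hr.1.le, hr.2.trans ht.2⟩)
  have claim : ∀ n : ℕ, ∀ t ∈ Set.Icc a S.T,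
      ‖v t - w t‖ ≤ S.M ^ n * (S.g t - S.g a) ^ n / n.factorial * B := by
    intro n
    induction n with
    | zero => intro t ht; simpa using hB' t ht
    | succ n ih =>
      intro t ht
      have hdiff : v t - w t = ∫ r in Set.Ioc a t, S.U (t - r) (S.G r (v r - w r)) := by
        rw [hveq t ht, hweq t ht, add_sub_add_left_eq_sub,
          ← integral_sub (hiv t ht) (hiw t ht)]
        exact setIntegral_congr_fun measurableSet_Ioc fun r _ => by
          rw [← map_sub, ← map_sub]
      have hint1 : IntegrableOn (fun r => S.U (t - r) (S.G r (v r - w r)))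
          (Set.Ioc a t) volume := by
        refine ((hiv t ht).sub (hiw t ht)).congr (Filter.Eventually.of_forall fun r => ?_)
        rw [Pi.sub_apply, ← map_sub, ← map_sub]
      have hint2 : IntegrableOn (fun r => (S.M ^ (n+1) / n.factorial * B)
          * (S.k r * (S.g r - S.g a) ^ n)) (Set.Ioc a t) volume :=
        (S.integrableOn_k_mul ((S.g_cont.sub continuous_const).pow n)).const_mul _
      have hbound : ∀ r ∈ Set.Ioc a t, ‖S.U (t - r) (S.G r (v r - w r))‖
          ≤ (S.M ^ (n+1) / n.factorial * B) * (S.k r * (S.g r - S.g a) ^ n) := by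
        intro r hr
        have hrI : r ∈ Set.Icc a S.T := ⟨hr.1.le, hr.2.trans ht.2⟩
        have hk : S.k r = ‖S.G r‖ := S.k_eq ⟨h0a.trans_lt hr.1, hr.2.trans ht.2⟩
        have h1 : ‖S.U (t - r) (S.G r (v r - w r))‖ ≤ S.M * ‖S.G r (v r - w r)‖ :=
          S.norm_U_apply_le ⟨by linarith [hr.2], by linarith [hr.1, ht.2]⟩ _
        have h2 : ‖S.G r (v r - w r)‖ ≤ S.k r * ‖v r - w r‖ := by
          rw [hk]; exact (S.G r).le_opNorm _
        have h3 := ih r hrI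
        have hM0 : (0:ℝ) ≤ S.M := S.M_pos.le
        have hk0 : (0:ℝ) ≤ S.k r := S.k_nonneg r
        calc ‖S.U (t - r) (S.G r (v r - w r))‖
            ≤ S.M * (S.k r * ‖v r - w r‖) := h1.trans (mul_le_mul_of_nonneg_left h2 hM0)
          _ ≤ S.M * (S.k r * (S.M ^ n * (S.g r - S.g a) ^ n / n.factorial * B)) :=
              mul_le_mul_of_nonneg_left (mul_le_mul_of_nonneg_left h3 hk0) hM0
          _ = (S.M ^ (n+1) / n.factorial * B) * (S.k r * (S.g r - S.g a) ^ n) := by ring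
      rw [hdiff]
      calc ‖∫ r in Set.Ioc a t, S.U (t - r) (S.G r (v r - w r))‖
          ≤ ∫ r in Set.Ioc a t, ‖S.U (t - r) (S.G r (v r - w r))‖ :=
            norm_integral_le_integral_norm _
        _ ≤ ∫ r in Set.Ioc a t, (S.M ^ (n+1) / n.factorial * B)
              * (S.k r * (S.g r - S.g a) ^ n) :=
            setIntegral_mono_on hint1.norm hint2 measurableSet_Ioc hbound
        _ = (S.M ^ (n+1) / n.factorial * B)
              * ∫ r in Set.Ioc a t, S.k r * (S.g r - S.g a) ^ n := integral_const_mul _ _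
        _ ≤ (S.M ^ (n+1) / n.factorial * B) * ((S.g t - S.g a) ^ (n+1) / (n+1)) := by
            refine mul_le_mul_of_nonneg_left ?_
              (mul_nonneg (div_nonneg (pow_nonneg S.M_pos.le _) (Nat.cast_nonneg _)) hBnn)
            rw [← intervalIntegral.integral_of_le ht.1]
            exact S.core ht.1 n
        _ = S.M ^ (n+1) * (S.g t - S.g a) ^ (n+1) / (n+1).factorial * B := by
            rw [Nat.factorial_succ]
            have hn : ((n.factorial : ℝ)) ≠ 0 := Nat.cast_ne_zero.mpr (Nat.factorial_pos n).ne'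
            field_simp
            push_cast
            ring
  intro t ht
  have hle : ∀ n : ℕ, ‖v t - w t‖ ≤ (S.M * S.K) ^ n / n.factorial * B := by
    intro n
    refine (claim n t ht).trans ?_
    have h2 : (0:ℝ) ≤ S.g t - S.g a := sub_nonneg.2 (S.g_mono ht.1)
    have h1 : S.g t - S.g a ≤ S.K := by
      unfold Setup.K
      have := S.g_mono ht.2
      have := S.g_mono h0a
      linarith
    have h3 : (S.g t - S.g a) ^ n ≤ S.K ^ n := pow_le_pow_left₀ h2 h1 n
    rw [mul_pow]
    have hfac : (0:ℝ) < n.factorial := Nat.cast_pos.mpr (Nat.factorial_pos n)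
    have hM0 : (0:ℝ) ≤ S.M ^ n := pow_nonneg S.M_pos.le n
    gcongr
  have hlim : Tendsto (fun n : ℕ => (S.M * S.K) ^ n / n.factorial * B) atTop (𝓝 0) := by
    have := (FloorSemiring.tendsto_pow_div_factorial_atTop (K := ℝ) (S.M * S.K)).mul_const B
    simpa using this
  have h0 : ‖v t - w t‖ ≤ 0 := ge_of_tendsto' hlim hle
  have := le_antisymm h0 (norm_nonneg _)
  rwa [norm_eq_zero, sub_eq_zero] at this

end Uniq

section Cocycle
variable [CompleteSpace X]

lemma Setup.integrableOn_T_integrand {𝕋 : ℝ → ℝ → (X →L[ℝ] X)} {C : ℝ}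
    (hC : ∀ t s : ℝ, ‖𝕋 t s‖ ≤ C)
    (hcont : ∀ y : X, Continuous fun p : ℝ × ℝ => 𝕋 p.1 p.2 y)
    {s t t' : ℝ} (h0s : 0 ≤ s) (htT : t ≤ S.T) (htt' : t ≤ t') (ht'T : t' ≤ S.T)
    (b : ℝ) (y : X) :
    IntegrableOn (fun ρ => S.U (t' - ρ) (S.G ρ (𝕋 ρ b y))) (Set.Ioc s t) volume := by
  refine S.integrableOn_UG h0s htT htt' ht'T ?_ (C := C * ‖y‖) ?_
  · have : Continuous fun ρ => 𝕋 ρ b y :=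
      (hcont y).comp (continuous_id.prodMk continuous_const)
    exact this.aestronglyMeasurable
  · intro ρ _
    exact ((𝕋 ρ b).le_opNorm y).trans
      (mul_le_mul_of_nonneg_right (hC ρ b) (norm_nonneg y))

lemma Setup.cocycle_apply {𝕋 : ℝ → ℝ → (X →L[ℝ] X)} {C : ℝ}
    (hC : ∀ t s : ℝ, ‖𝕋 t s‖ ≤ C)
    (hcont : ∀ y : X, Continuous fun p : ℝ × ℝ => 𝕋 p.1 p.2 y)
    (hD : ∀ s t : ℝ, 0 ≤ s → s ≤ t → t ≤ S.T → ∀ y : X,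
      𝕋 t s y = S.U (t - s) y + ∫ r in Set.Ioc s t, S.U (t - r) (S.G r (𝕋 r s y)))
    {s r t : ℝ} (h0s : 0 ≤ s) (hsr : s ≤ r) (hrt : r ≤ t) (htT : t ≤ S.T) (y : X) :
    𝕋 t r (𝕋 r s y) = 𝕋 t s y := by
  have h0r : 0 ≤ r := h0s.trans hsr
  have hrT : r ≤ S.T := hrt.trans htT
  set x : X := 𝕋 r s y with hx
  have hv : ContinuousOn (fun t' => 𝕋 t' r x) (Set.Icc r S.T) :=
    ((hcont x).comp (continuous_id.prodMk continuous_const)).continuousOn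
  have hw : ContinuousOn (fun t' => 𝕋 t' s y) (Set.Icc r S.T) :=
    ((hcont y).comp (continuous_id.prodMk continuous_const)).continuousOn
  have hveq : ∀ t' ∈ Set.Icc r S.T, 𝕋 t' r x
      = S.U (t' - r) x + ∫ ρ in Set.Ioc r t', S.U (t' - ρ) (S.G ρ (𝕋 ρ r x)) :=
    fun t' ht' => hD r t' h0r ht'.1 ht'.2 x
  have hweq : ∀ t' ∈ Set.Icc r S.T, 𝕋 t' s y
      = S.U (t' - r) x + ∫ ρ in Set.Ioc r t', S.U (t' - ρ) (S.G ρ (𝕋 ρ s y)) := by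
    intro t' ht'
    have hst' : s ≤ t' := hsr.trans ht'.1
    have hi1 : IntegrableOn (fun ρ => S.U (t' - ρ) (S.G ρ (𝕋 ρ s y)))
        (Set.Ioc s r) volume :=
      S.integrableOn_T_integrand hC hcont h0s hrT ht'.1 ht'.2 s y
    have hi2 : IntegrableOn (fun ρ => S.U (t' - ρ) (S.G ρ (𝕋 ρ s y)))
        (Set.Ioc r t') volume :=
      S.integrableOn_T_integrand hC hcont h0r ht'.2 le_rfl ht'.2 s y
    have hsplit : (∫ ρ in Set.Ioc s t', S.U (t' - ρ) (S.G ρ (𝕋 ρ s y)))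
        = (∫ ρ in Set.Ioc s r, S.U (t' - ρ) (S.G ρ (𝕋 ρ s y)))
          + ∫ ρ in Set.Ioc r t', S.U (t' - ρ) (S.G ρ (𝕋 ρ s y)) := by
      rw [← setIntegral_union (Set.Ioc_disjoint_Ioc_of_le le_rfl) measurableSet_Ioc hi1 hi2,
        Set.Ioc_union_Ioc_eq_Ioc hsr ht'.1]
    have hpull : S.U (t' - r) x
        = S.U (t' - s) y + ∫ ρ in Set.Ioc s r, S.U (t' - ρ) (S.G ρ (𝕋 ρ s y)) := by
      have hDr := hD s r h0s hsr hrT y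
      have hir : IntegrableOn (fun ρ => S.U (r - ρ) (S.G ρ (𝕋 ρ s y)))
          (Set.Ioc s r) volume :=
        S.integrableOn_T_integrand hC hcont h0s hrT le_rfl hrT s y
      rw [hx, hDr, map_add]
      congr 1
      · have hadd := S.hUadd (r - s) (by linarith) (t' - r) (by linarith [ht'.1])
        have : t' - r + (r - s) = t' - s := by ring
        rw [this] at hadd
        rw [hadd]
        rfl
      · rw [← ContinuousLinearMap.integral_comp_comm _ hir]
        refine setIntegral_congr_fun measurableSet_Ioc fun ρ hρ => ?_
        have hadd := S.hUadd (r - ρ) (by linarith [hρ.2]) (t' - r) (by linarith [ht'.1])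
        have heq : t' - r + (r - ρ) = t' - ρ := by ring
        rw [heq] at hadd
        rw [hadd]
        rfl
    rw [hD s t' h0s hst' ht'.2 y, hsplit, hpull]
    abel
  have := S.uniq1 h0r hv hw hveq hweq
  exact (this ⟨hrt, htT⟩)

end Cocycle


end EvolOp

namespace EvolOp

variable {X : Type*} [NormedAddCommGroup X] [NormedSpace ℝ X] (S : Setup X) [CompleteSpace X]

lemma Setup.backward {𝕋 : ℝ → ℝ → (X →L[ℝ] X)} {C : ℝ} (hC0 : 0 ≤ C)
    (hC : ∀ t s : ℝ, ‖𝕋 t s‖ ≤ C)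
    (hcont : ∀ y : X, Continuous fun p : ℝ × ℝ => 𝕋 p.1 p.2 y)
    (hD : ∀ s t : ℝ, 0 ≤ s → s ≤ t → t ≤ S.T → ∀ y : X, 𝕋 t s y
      = S.U (t - s) y + ∫ r in Set.Ioc s t, S.U (t - r) (S.G r (𝕋 r s y)))
    {s t : ℝ} (h0s : 0 ≤ s) (hst : s ≤ t) (htT : t ≤ S.T) (y : X) :
    𝕋 t s y = S.U (t - s) y + ∫ r in Set.Ioc s t, 𝕋 t r (S.G r (S.U (r - s) y)) := by
  set x_ : ℝ → X := fun ρ => S.G ρ (S.U (ρ - s) y) with hx_def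
  have hMy : (0:ℝ) ≤ S.M * ‖y‖ := mul_nonneg S.M_pos.le (norm_nonneg y)
  -- basic facts about x_
  have hx_m : ∀ τ : ℝ, τ ≤ S.T → AEStronglyMeasurable x_ (volume.restrict (Set.Ioc s τ)) := by
    intro τ hτ
    refine aesm_apply S.G
      (fun z => S.aesm_G_restrict measurableSet_Ioc (Set.Ioc_subset_Ioc h0s hτ) z) ?_
    exact S.aesm_U_comp (by fun_prop) measurableSet_Ioc (fun ρ hρ => by linarith [hρ.1]) y
  have hx_b : ∀ ρ ∈ Set.Ioc s S.T, ‖x_ ρ‖ ≤ S.k ρ * (S.M * ‖y‖) := by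
    intro ρ hρ
    have hk : S.k ρ = ‖S.G ρ‖ := S.k_eq ⟨h0s.trans_lt hρ.1, hρ.2⟩
    have hU : ‖S.U (ρ - s) y‖ ≤ S.M * ‖y‖ :=
      S.norm_U_apply_le ⟨by linarith [hρ.1], by linarith [hρ.2]⟩ y
    calc ‖S.G ρ (S.U (ρ - s) y)‖ ≤ ‖S.G ρ‖ * ‖S.U (ρ - s) y‖ := (S.G ρ).le_opNorm _
      _ ≤ ‖S.G ρ‖ * (S.M * ‖y‖) := mul_le_mul_of_nonneg_left hU (norm_nonneg _)
      _ = S.k ρ * (S.M * ‖y‖) := by rw [hk]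
  have hx_int : ∀ τ : ℝ, τ ≤ S.T → IntegrableOn x_ (Set.Ioc s τ) volume := by
    intro τ hτ
    refine Integrable.mono' ((S.k_int.restrict).mul_const (S.M * ‖y‖)) (hx_m τ hτ) ?_
    filter_upwards [ae_restrict_mem measurableSet_Ioc] with ρ hρ
    exact hx_b ρ ⟨hρ.1, hρ.2.trans hτ⟩
  have hTx : ∀ a τ : ℝ, τ ≤ S.T → IntegrableOn (fun ρ => 𝕋 a ρ (x_ ρ))
      (Set.Ioc s τ) volume := by
    intro a τ hτ
    refine integrable_apply (A := fun ρ => 𝕋 a ρ) ?_ (C := C)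
      (ae_of_all _ fun ρ => hC a ρ) (hx_int τ hτ)
    intro z
    exact ((hcont z).comp (continuous_const.prodMk continuous_id)).aestronglyMeasurable
  have hUx_int : ∀ τ : ℝ, s ≤ τ → τ ≤ S.T →
      IntegrableOn (fun ρ => S.U (τ - ρ) (x_ ρ)) (Set.Ioc s τ) volume := by
    intro τ hsτ hτ
    refine S.integrableOn_UG h0s hτ le_rfl hτ ?_ (C := S.M * ‖y‖) ?_
    · exact S.aesm_U_comp (by fun_prop) measurableSet_Ioc (fun ρ hρ => by linarith [hρ.1]) y
    · intro ρ hρ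
      exact S.norm_U_apply_le ⟨by linarith [hρ.1], by linarith [hρ.2, hτ]⟩ y
  -- the candidate function z
  set z : ℝ → X := fun τ => S.U (τ - s) y + ∫ ρ in Set.Ioc s (min τ S.T), 𝕋 τ ρ (x_ ρ)
    with hz_def
  -- continuity of z
  have hzc : ContinuousOn z (Set.Icc s S.T) := by
    refine ContinuousOn.add ?_ ?_
    · exact (S.hUcont y).comp (by fun_prop) (fun τ hτ => Set.mem_Ici.mpr (by linarith [hτ.1]))
    · refine (S.cont_int (P := ℝ) (σ := fun _ => s) (κ := fun τ => min τ S.T)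
        continuous_const (by fun_prop) (fun _ => h0s) (fun τ => min_le_right _ _)
        (W := fun τ ρ => 𝕋 τ ρ (x_ ρ)) ?_
        (b := fun ρ => (C * (S.M * ‖y‖)) * S.k ρ)
        ((S.k_int.restrict).const_mul _)
        (fun ρ => mul_nonneg (mul_nonneg hC0 hMy) (S.k_nonneg ρ)) ?_ ?_).continuousOn
      · intro τ
        refine aesm_apply (A := fun ρ => 𝕋 τ ρ) ?_ (hx_m _ (min_le_right _ _))
        intro z
        exact ((hcont z).comp (continuous_const.prodMk continuous_id)).aestronglyMeasurable
      · intro τ ρ hρ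
        have hb := hx_b ρ ⟨hρ.1, hρ.2.trans (min_le_right _ _)⟩
        calc ‖𝕋 τ ρ (x_ ρ)‖ ≤ ‖𝕋 τ ρ‖ * ‖x_ ρ‖ := (𝕋 τ ρ).le_opNorm _
          _ ≤ C * (S.k ρ * (S.M * ‖y‖)) := by
              refine mul_le_mul (hC τ ρ) hb (norm_nonneg _) hC0
          _ = (C * (S.M * ‖y‖)) * S.k ρ := by ring
      · intro ρ τ₀ _ _
        exact ((hcont (x_ ρ)).comp (continuous_id.prodMk continuous_const)).continuousAt
  -- z is bounded on [s, T]
  have hz_b : ∀ ρ ∈ Set.Icc s S.T, ‖z ρ‖ ≤ S.M * ‖y‖ + C * (S.M * ‖y‖) * S.K := by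
    intro ρ hρ
    have h1 : ‖S.U (ρ - s) y‖ ≤ S.M * ‖y‖ :=
      S.norm_U_apply_le ⟨by linarith [hρ.1], by linarith [hρ.2]⟩ y
    have hminT : min ρ S.T = ρ := min_eq_left hρ.2
    have h2 : ‖∫ σ in Set.Ioc s (min ρ S.T), 𝕋 ρ σ (x_ σ)‖ ≤ C * (S.M * ‖y‖) * S.K := by
      rw [hminT]
      rcases le_or_gt s ρ with hsρ | hsρ
      · calc ‖∫ σ in Set.Ioc s ρ, 𝕋 ρ σ (x_ σ)‖
            ≤ ∫ σ in Set.Ioc s ρ, ‖𝕋 ρ σ (x_ σ)‖ := norm_integral_le_integral_norm _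
          _ ≤ ∫ σ in Set.Ioc s ρ, (C * (S.M * ‖y‖)) * S.k σ := by
              refine setIntegral_mono_on (hTx ρ ρ hρ.2).norm
                (((S.k_int.restrict).const_mul _)) measurableSet_Ioc ?_
              intro σ hσ
              have hb := hx_b σ ⟨hσ.1, hσ.2.trans hρ.2⟩
              calc ‖𝕋 ρ σ (x_ σ)‖ ≤ ‖𝕋 ρ σ‖ * ‖x_ σ‖ := (𝕋 ρ σ).le_opNorm _
                _ ≤ C * (S.k σ * (S.M * ‖y‖)) :=
                    mul_le_mul (hC ρ σ) hb (norm_nonneg _) hC0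
                _ = (C * (S.M * ‖y‖)) * S.k σ := by ring
          _ = (C * (S.M * ‖y‖)) * (S.g ρ - S.g s) := by
              rw [integral_const_mul, S.integral_k hsρ]
          _ ≤ C * (S.M * ‖y‖) * S.K := by
              refine mul_le_mul_of_nonneg_left ?_ (mul_nonneg hC0 hMy)
              unfold Setup.K
              have := S.g_mono hρ.2
              have := S.g_mono h0s
              linarith
      · rw [Set.Ioc_eq_empty (by exact fun hlt => absurd hρ.1 (not_le.mpr hsρ))]
        simp only [Measure.restrict_empty, integral_zero_measure, norm_zero]
        exact mul_nonneg (mul_nonneg hC0 hMy) S.K_nonneg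
    calc ‖z ρ‖ ≤ ‖S.U (ρ - s) y‖ + ‖∫ σ in Set.Ioc s (min ρ S.T), 𝕋 ρ σ (x_ σ)‖ :=
          norm_add_le _ _
      _ ≤ S.M * ‖y‖ + C * (S.M * ‖y‖) * S.K := add_le_add h1 h2
  -- z satisfies the forward Volterra equation
  have hzeq : ∀ τ ∈ Set.Icc s S.T,
      z τ = S.U (τ - s) y + ∫ ρ in Set.Ioc s τ, S.U (τ - ρ) (S.G ρ (z ρ)) := by
    intro τ hτ
    have hminτ : min τ S.T = τ := min_eq_left hτ.2
    have hz_m : AEStronglyMeasurable z (volume.restrict (Set.Ioc s τ)) :=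
      aesm_restrict_of_subset
        (fun ρ (hρ : ρ ∈ Set.Ioc s τ) => Set.mem_Icc.mpr ⟨hρ.1.le, hρ.2.trans hτ.2⟩)
        measurableSet_Ioc (hzc.aestronglyMeasurable measurableSet_Icc)
    have hi_main : IntegrableOn (fun ρ => S.U (τ - ρ) (S.G ρ (z ρ)))
        (Set.Ioc s τ) volume :=
      S.integrableOn_UG h0s hτ.2 le_rfl hτ.2 hz_m
        (fun ρ hρ => hz_b ρ ⟨hρ.1.le, hρ.2.trans hτ.2⟩)
    have hi_x : IntegrableOn (fun ρ => S.U (τ - ρ) (x_ ρ)) (Set.Ioc s τ) volume :=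
      hUx_int τ hτ.1 hτ.2
    -- pointwise decomposition of the main integrand
    have hpt : ∀ ρ ∈ Set.Ioc s τ, S.U (τ - ρ) (S.G ρ (z ρ))
        = S.U (τ - ρ) (x_ ρ) + S.U (τ - ρ) (S.G ρ (∫ σ in Set.Ioc s ρ, 𝕋 ρ σ (x_ σ))) := by
      intro ρ hρ
      have : z ρ = S.U (ρ - s) y + ∫ σ in Set.Ioc s ρ, 𝕋 ρ σ (x_ σ) := by
        simp only [hz_def]
        rw [min_eq_left (hρ.2.trans hτ.2)]
      rw [this, map_add, map_add]
    have hi_inner : IntegrableOn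
        (fun ρ => S.U (τ - ρ) (S.G ρ (∫ σ in Set.Ioc s ρ, 𝕋 ρ σ (x_ σ))))
        (Set.Ioc s τ) volume := by
      refine (hi_main.sub hi_x).congr ?_
      filter_upwards [ae_restrict_mem measurableSet_Ioc] with ρ hρ
      rw [Pi.sub_apply, hpt ρ hρ]
      abel
    -- the double-integral term
    have hA1 : (∫ ρ in Set.Ioc s τ, S.U (τ - ρ) (S.G ρ (∫ σ in Set.Ioc s ρ, 𝕋 ρ σ (x_ σ))))
        = ∫ ρ in Set.Ioc s τ, ∫ σ in Set.Ioc s τ,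
            (Set.Iic ρ).indicator (fun σ => S.U (τ - ρ) (S.G ρ (𝕋 ρ σ (x_ σ)))) σ := by
      refine setIntegral_congr_fun measurableSet_Ioc fun ρ hρ => ?_
      have hpull : S.U (τ - ρ) (S.G ρ (∫ σ in Set.Ioc s ρ, 𝕋 ρ σ (x_ σ)))
          = ∫ σ in Set.Ioc s ρ, S.U (τ - ρ) (S.G ρ (𝕋 ρ σ (x_ σ))) := by
        have h := ContinuousLinearMap.integral_comp_comm
          ((S.U (τ - ρ)).comp (S.G ρ)) (hTx ρ ρ (hρ.2.trans hτ.2))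
        simpa using h.symm
      rw [hpull]
      rw [integral_indicator measurableSet_Iic, Measure.restrict_restrict measurableSet_Iic]
      congr 1
      rw [Set.inter_comm, Set.Ioc_inter_Iic, min_eq_right hρ.2]
    -- Fubini
    have hswap : (∫ ρ in Set.Ioc s τ, ∫ σ in Set.Ioc s τ,
          (Set.Iic ρ).indicator (fun σ => S.U (τ - ρ) (S.G ρ (𝕋 ρ σ (x_ σ)))) σ)
        = ∫ σ in Set.Ioc s τ, ∫ ρ in Set.Ioc s τ,
            (Set.Iic ρ).indicator (fun σ' => S.U (τ - ρ) (S.G ρ (𝕋 ρ σ' (x_ σ')))) σ := by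
      refine integral_integral_swap ?_
      set μs := volume.restrict (Set.Ioc s τ) with hμs
      have hFF : AEStronglyMeasurable
          (fun q : ℝ × ℝ => S.U (τ - q.1) (S.G q.1 (𝕋 q.1 q.2 (x_ q.2)))) (μs.prod μs) := by
        have a0 : AEStronglyMeasurable (fun q : ℝ × ℝ => x_ q.2) (μs.prod μs) :=
          (hx_m τ hτ.2).comp_snd
        have a1 : AEStronglyMeasurable (fun q : ℝ × ℝ => 𝕋 q.1 q.2 (x_ q.2)) (μs.prod μs) :=
          aesm_apply (fun q : ℝ × ℝ => 𝕋 q.1 q.2)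
            (fun z => (hcont z).aestronglyMeasurable) a0
        have a2 : AEStronglyMeasurable (fun q : ℝ × ℝ => S.G q.1 (𝕋 q.1 q.2 (x_ q.2)))
            (μs.prod μs) :=
          aesm_apply (fun q : ℝ × ℝ => S.G q.1)
            (fun z => AEStronglyMeasurable.comp_fst
              (S.aesm_G_restrict measurableSet_Ioc (Set.Ioc_subset_Ioc h0s hτ.2) z)) a1
        exact aesm_apply (fun q : ℝ × ℝ => S.U (τ - q.1))
          (fun z => AEStronglyMeasurable.comp_fst
            (S.aesm_U_comp (by fun_prop) measurableSet_Ioc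
              (fun ρ hρ => by linarith [hρ.2]) z)) a2
      have hmeas : AEStronglyMeasurable
          (Function.uncurry fun ρ σ =>
            (Set.Iic ρ).indicator (fun σ' => S.U (τ - ρ) (S.G ρ (𝕋 ρ σ' (x_ σ')))) σ)
          (μs.prod μs) := by
        have heq : (Function.uncurry fun ρ σ =>
            (Set.Iic ρ).indicator (fun σ' => S.U (τ - ρ) (S.G ρ (𝕋 ρ σ' (x_ σ')))) σ)
            = Set.indicator {q : ℝ × ℝ | q.2 ≤ q.1}
                (fun q => S.U (τ - q.1) (S.G q.1 (𝕋 q.1 q.2 (x_ q.2)))) := by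
          funext q
          rw [Function.uncurry]
          by_cases h : q.2 ≤ q.1
          · rw [Set.indicator_of_mem (Set.mem_Iic.mpr h),
              Set.indicator_of_mem (by exact h)]
          · rw [Set.indicator_of_notMem (fun hc => h (Set.mem_Iic.mp hc)),
              Set.indicator_of_notMem (by exact h)]
        rw [heq]
        exact hFF.indicator (measurableSet_le measurable_snd measurable_fst)
      refine Integrable.mono'
        (g := fun q : ℝ × ℝ => (S.M * (C * (S.M * ‖y‖))) * (S.k q.1 * S.k q.2)) ?_ hmeas ?_
      · have := (S.k_int.restrict (s := Set.Ioc s τ)).mul_prod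
          (S.k_int.restrict (s := Set.Ioc s τ))
        exact (this.const_mul _)
      · have hps : μs.prod μs
            = (volume.prod volume).restrict ((Set.Ioc s τ) ×ˢ (Set.Ioc s τ)) :=
          Measure.prod_restrict _ _
        rw [hps]
        filter_upwards [ae_restrict_mem (measurableSet_Ioc.prod measurableSet_Ioc)] with q hq
        have hq1 : q.1 ∈ Set.Ioc s τ := hq.1
        have hq2 : q.2 ∈ Set.Ioc s τ := hq.2
        have hknn : 0 ≤ S.k q.1 * S.k q.2 := mul_nonneg (S.k_nonneg _) (S.k_nonneg _)
        show ‖(Set.Iic q.1).indicator (fun σ' => S.U (τ - q.1) (S.G q.1 (𝕋 q.1 σ' (x_ σ')))) q.2‖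
          ≤ _
        by_cases h : q.2 ≤ q.1
        · rw [Set.indicator_of_mem (Set.mem_Iic.mpr h)]
          have hb := hx_b q.2 ⟨hq2.1, hq2.2.trans hτ.2⟩
          have hk1 : S.k q.1 = ‖S.G q.1‖ := S.k_eq ⟨h0s.trans_lt hq1.1, hq1.2.trans hτ.2⟩
          have h1 : ‖S.U (τ - q.1) (S.G q.1 (𝕋 q.1 q.2 (x_ q.2)))‖
              ≤ S.M * ‖S.G q.1 (𝕋 q.1 q.2 (x_ q.2))‖ :=
            S.norm_U_apply_le ⟨by linarith [hq1.2], by linarith [hq1.1, hτ.2]⟩ _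
          have h2 : ‖S.G q.1 (𝕋 q.1 q.2 (x_ q.2))‖ ≤ S.k q.1 * ‖𝕋 q.1 q.2 (x_ q.2)‖ := by
            rw [hk1]; exact (S.G q.1).le_opNorm _
          have h3 : ‖𝕋 q.1 q.2 (x_ q.2)‖ ≤ C * (S.k q.2 * (S.M * ‖y‖)) :=
            ((𝕋 q.1 q.2).le_opNorm _).trans
              (mul_le_mul (hC _ _) hb (norm_nonneg _) hC0)
          calc ‖S.U (τ - q.1) (S.G q.1 (𝕋 q.1 q.2 (x_ q.2)))‖
              ≤ S.M * (S.k q.1 * ‖𝕋 q.1 q.2 (x_ q.2)‖) :=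
                h1.trans (mul_le_mul_of_nonneg_left h2 S.M_pos.le)
            _ ≤ S.M * (S.k q.1 * (C * (S.k q.2 * (S.M * ‖y‖)))) :=
                mul_le_mul_of_nonneg_left
                  (mul_le_mul_of_nonneg_left h3 (S.k_nonneg _)) S.M_pos.le
            _ = (S.M * (C * (S.M * ‖y‖))) * (S.k q.1 * S.k q.2) := by ring
        · rw [Set.indicator_of_notMem (fun hc => h (Set.mem_Iic.mp hc))]
          simp only [norm_zero]
          exact mul_nonneg (mul_nonneg S.M_pos.le (mul_nonneg hC0 hMy)) hknn
    -- evaluate the inner integral after swapping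
    have hinner : ∀ σ ∈ Set.Ioc s τ,
        (∫ ρ in Set.Ioc s τ,
          (Set.Iic ρ).indicator (fun σ' => S.U (τ - ρ) (S.G ρ (𝕋 ρ σ' (x_ σ')))) σ)
        = 𝕋 τ σ (x_ σ) - S.U (τ - σ) (x_ σ) := by
      intro σ hσ
      have h1 : (fun ρ => (Set.Iic ρ).indicator
            (fun σ' => S.U (τ - ρ) (S.G ρ (𝕋 ρ σ' (x_ σ')))) σ)
          = (Set.Ici σ).indicator (fun ρ => S.U (τ - ρ) (S.G ρ (𝕋 ρ σ (x_ σ)))) := by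
        funext ρ
        by_cases h : σ ≤ ρ
        · rw [Set.indicator_of_mem (Set.mem_Iic.mpr h),
            Set.indicator_of_mem (Set.mem_Ici.mpr h)]
        · rw [Set.indicator_of_notMem (fun hc => h (Set.mem_Iic.mp hc)),
            Set.indicator_of_notMem (fun hc => h (Set.mem_Ici.mp hc))]
      rw [h1, integral_indicator measurableSet_Ici,
        Measure.restrict_restrict measurableSet_Ici]
      have h2 : Set.Ici σ ∩ Set.Ioc s τ = Set.Icc σ τ := by
        ext ρ
        simp only [Set.mem_inter_iff, Set.mem_Ici, Set.mem_Ioc, Set.mem_Icc]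
        constructor
        · rintro ⟨h1', _, h3'⟩; exact ⟨h1', h3'⟩
        · rintro ⟨h1', h2'⟩; exact ⟨h1', hσ.1.trans_le h1', h2'⟩
      rw [h2, integral_Icc_eq_integral_Ioc]
      have hDσ := hD σ τ (h0s.trans hσ.1.le) hσ.2 hτ.2 (x_ σ)
      rw [hDσ]
      abel
    -- put the pieces together
    have hIT : (∫ σ in Set.Ioc s τ, (𝕋 τ σ (x_ σ) - S.U (τ - σ) (x_ σ)))
        = (∫ σ in Set.Ioc s τ, 𝕋 τ σ (x_ σ)) - ∫ σ in Set.Ioc s τ, S.U (τ - σ) (x_ σ) :=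
      integral_sub (hTx τ τ hτ.2) hi_x
    have hmain : (∫ ρ in Set.Ioc s τ, S.U (τ - ρ) (S.G ρ (z ρ)))
        = (∫ ρ in Set.Ioc s τ, S.U (τ - ρ) (x_ ρ))
          + ((∫ σ in Set.Ioc s τ, 𝕋 τ σ (x_ σ)) - ∫ σ in Set.Ioc s τ, S.U (τ - σ) (x_ σ)) := by
      rw [← hIT]
      have hstep : (∫ ρ in Set.Ioc s τ, S.U (τ - ρ) (S.G ρ (z ρ)))
          = (∫ ρ in Set.Ioc s τ, S.U (τ - ρ) (x_ ρ))
            + ∫ ρ in Set.Ioc s τ, S.U (τ - ρ) (S.G ρ (∫ σ in Set.Ioc s ρ, 𝕋 ρ σ (x_ σ))) := by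
        rw [← integral_add hi_x hi_inner]
        exact setIntegral_congr_fun measurableSet_Ioc hpt
      rw [hstep, hA1, hswap]
      congr 1
      exact setIntegral_congr_fun measurableSet_Ioc hinner
    show S.U (τ - s) y + ∫ ρ in Set.Ioc s (min τ S.T), 𝕋 τ ρ (x_ ρ) = _
    rw [hminτ, hmain]
    abel
  -- conclude by uniqueness
  have hwc : ContinuousOn (fun τ => 𝕋 τ s y) (Set.Icc s S.T) :=
    ((hcont y).comp (continuous_id.prodMk continuous_const)).continuousOn
  have hweq : ∀ τ ∈ Set.Icc s S.T, 𝕋 τ s y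
      = S.U (τ - s) y + ∫ ρ in Set.Ioc s τ, S.U (τ - ρ) (S.G ρ (𝕋 ρ s y)) :=
    fun τ hτ => hD s τ h0s hτ.1 hτ.2 y
  have hfin : z t = 𝕋 t s y := S.uniq1 h0s hzc hwc hzeq hweq (Set.mem_Icc.mpr ⟨hst, htT⟩)
  have hzt : z t = S.U (t - s) y + ∫ ρ in Set.Ioc s t, 𝕋 t ρ (x_ ρ) := by
    show S.U (t - s) y + ∫ ρ in Set.Ioc s (min t S.T), 𝕋 t ρ (x_ ρ) = _
    rw [min_eq_left htT]
  rw [← hfin]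
  exact hzt

end EvolOp



open Filter MeasureTheory

/-- `G : [0,T] → L(X)` is strongly measurable and square integrable:
`G ∈ L²([0,T]; L(X))`. -/
def IsL2OperatorValued {X : Type*} [NormedAddCommGroup X] [NormedSpace ℝ X]
    (T : ℝ) (G : ℝ → (X →L[ℝ] X)) : Prop :=
  (∀ x : X, AEStronglyMeasurable (fun t => G t x) (volume.restrict (Set.Ioc 0 T))) ∧
  MemLp (fun t => ‖G t‖) 2 (volume.restrict (Set.Ioc 0 T))

/-- The defining properties of the evolution operator `𝔗(·,·;G)` generated by the semigroup
`𝔘` perturbed by `G`: strong continuity on `Δ = {(t,s) : 0 ≤ s ≤ t ≤ T}`, the identity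
property on the diagonal, the cocycle property, and the two integral equations. -/
def IsEvolutionOperator {X : Type*} [NormedAddCommGroup X] [NormedSpace ℝ X]
    (𝔘 : ℝ → (X →L[ℝ] X)) (T : ℝ) (G : ℝ → (X →L[ℝ] X))
    (𝔗 : ℝ → ℝ → (X →L[ℝ] X)) : Prop :=
  (∀ y : X, ContinuousOn (fun p : ℝ × ℝ => 𝔗 p.1 p.2 y)
    {p : ℝ × ℝ | 0 ≤ p.2 ∧ p.2 ≤ p.1 ∧ p.1 ≤ T}) ∧
  (∀ t : ℝ, t ∈ Set.Icc 0 T → 𝔗 t t = 1) ∧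
  (∀ s r t : ℝ, 0 ≤ s → s ≤ r → r ≤ t → t ≤ T → 𝔗 t r ∘L 𝔗 r s = 𝔗 t s) ∧
  (∀ s t : ℝ, 0 ≤ s → s ≤ t → t ≤ T → ∀ y : X,
    𝔗 t s y = 𝔘 (t - s) y + ∫ r in s..t, 𝔘 (t - r) (G r (𝔗 r s y))) ∧
  (∀ s t : ℝ, 0 ≤ s → s ≤ t → t ≤ T → ∀ y : X,
    𝔗 t s y = 𝔘 (t - s) y + ∫ r in s..t, 𝔗 t r (G r (𝔘 (r - s) y)))

/-- For any `G ∈ L²([0,T]; L(X))` there exists a unique strongly continuous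
evolution operator `𝔗 : Δ → L(X)` with `𝔗(t,t) = I`, `𝔗(t,r)𝔗(r,s) = 𝔗(t,s)` and
`𝔗(t,s;G)y = 𝔘(t−s)y + ∫ₛᵗ 𝔘(t−r)G(r)𝔗(r,s;G)y dr = 𝔘(t−s)y + ∫ₛᵗ 𝔗(t,r;G)G(r)𝔘(r−s)y dr`. -/
theorem exists_unique_evolution_operator
    {X : Type*} [NormedAddCommGroup X] [InnerProductSpace ℝ X] [CompleteSpace X]
    [TopologicalSpace.SeparableSpace X]
    (𝔘 : ℝ → (X →L[ℝ] X))
    (h𝔘0 : 𝔘 0 = 1)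
    (h𝔘add : ∀ s ≥ (0 : ℝ), ∀ t ≥ (0 : ℝ), 𝔘 (t + s) = 𝔘 t ∘L 𝔘 s)
    (h𝔘cont : ∀ x : X, ContinuousOn (fun t => 𝔘 t x) (Set.Ici 0))
    (T : ℝ) (hT : 0 < T)
    (G : ℝ → (X →L[ℝ] X)) (hG : IsL2OperatorValued T G) :
    ∃ 𝔗 : ℝ → ℝ → (X →L[ℝ] X), IsEvolutionOperator 𝔘 T G 𝔗 ∧
      ∀ 𝔗' : ℝ → ℝ → (X →L[ℝ] X), IsEvolutionOperator 𝔘 T G 𝔗' →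
        ∀ s t : ℝ, 0 ≤ s → s ≤ t → t ≤ T → 𝔗' t s = 𝔗 t s := by
  classical
  -- uniform bound on the semigroup over `[0, T]` via Banach–Steinhaus
  obtain ⟨M₀, hM₀⟩ : ∃ M₀ : ℝ, ∀ i : {t : ℝ // t ∈ Set.Icc (0:ℝ) T}, ‖𝔘 i.1‖ ≤ M₀ := by
    refine banach_steinhaus (fun x => ?_)
    obtain ⟨Cx, hCx⟩ := IsCompact.exists_bound_of_continuousOn isCompact_Icc
      ((h𝔘cont x).mono (fun τ (hτ : τ ∈ Set.Icc (0:ℝ) T) => Set.mem_Ici.mpr hτ.1))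
    exact ⟨Cx, fun i => hCx i.1 i.2⟩
  -- finiteness of the restricted measure
  haveI : IsFiniteMeasure (volume.restrict (Set.Ioc (0:ℝ) T)) := by
    constructor
    rw [Measure.restrict_apply_univ, Real.volume_Ioc]
    exact ENNReal.ofReal_lt_top
  have hGint : Integrable (Set.indicator (Set.Ioc 0 T) (fun r => ‖G r‖)) volume := by
    rw [integrable_indicator_iff measurableSet_Ioc]
    exact hG.2.integrable one_le_two
  set S : EvolOp.Setup X :=
    { U := 𝔘, T := T, G := G, M := max M₀ 1,
      hM1 := le_max_right _ _,
      hM := fun t ht => le_trans (hM₀ ⟨t, ht⟩) (le_max_left _ _),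
      hU0 := h𝔘0,
      hUadd := h𝔘add,
      hUcont := h𝔘cont,
      hT := hT,
      hGx := hG.1,
      hGint := hGint } with hS
  obtain ⟨𝕋, C, hC0, hC, hcont, hD⟩ := S.exists_T
  refine ⟨𝕋, ⟨?_, ?_, ?_, ?_, ?_⟩, ?_⟩
  · exact fun y => (hcont y).continuousOn
  · intro t ht
    refine ContinuousLinearMap.ext fun y => ?_
    have h := hD t t ht.1 le_rfl ht.2 y
    rw [sub_self, Set.Ioc_self, Measure.restrict_empty, integral_zero_measure, add_zero] at h
    rw [h]
    show (𝔘 0) y = _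
    rw [h𝔘0]
  · intro s r t h0s hsr hrt htT
    refine ContinuousLinearMap.ext fun y => ?_
    have := S.cocycle_apply hC hcont hD h0s hsr hrt htT y
    simpa using this
  · intro s t h0s hst htT y
    rw [intervalIntegral.integral_of_le hst]
    exact hD s t h0s hst htT y
  · intro s t h0s hst htT y
    rw [intervalIntegral.integral_of_le hst]
    exact S.backward hC0 hC hcont hD h0s hst htT y
  · rintro 𝔗' ⟨hA', _, _, hD', _⟩ s t h0s hst htT
    refine ContinuousLinearMap.ext fun y => ?_
    have hv : ContinuousOn (fun τ => 𝔗' τ s y) (Set.Icc s T) := by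
      refine (hA' y).comp ((continuous_id.prodMk continuous_const).continuousOn) ?_
      intro τ hτ
      exact ⟨h0s, hτ.1, hτ.2⟩
    have hw : ContinuousOn (fun τ => 𝕋 τ s y) (Set.Icc s T) :=
      ((hcont y).comp (continuous_id.prodMk continuous_const)).continuousOn
    have hveq : ∀ τ ∈ Set.Icc s T, 𝔗' τ s y
        = 𝔘 (τ - s) y + ∫ ρ in Set.Ioc s τ, 𝔘 (τ - ρ) (G ρ (𝔗' ρ s y)) := by
      intro τ hτ
      have h := hD' s τ h0s hτ.1 hτ.2 y
      rwa [intervalIntegral.integral_of_le hτ.1] at h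
    have hweq : ∀ τ ∈ Set.Icc s T, 𝕋 τ s y
        = 𝔘 (τ - s) y + ∫ ρ in Set.Ioc s τ, 𝔘 (τ - ρ) (G ρ (𝕋 ρ s y)) :=
      fun τ hτ => hD s τ h0s hτ.1 hτ.2 y
    exact S.uniq1 h0s hv hw hveq hweq (Set.mem_Icc.mpr ⟨hst, htT⟩)
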